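/- arXiv:2104.09004 — 5 statements merged into one kernel-verified Lean document; each statement's English description precedes it below -/
import Mathlib

section
/- For every integer n ≥ 1, the IR-graph G_n(IR) of the graph G_n is isomorphic to the double star S(2n,2n). -/
open SimpleGraph

section IRDefs

variable {V : Type*}

/-- `w` is a `D`-private neighbour of `v`: `w` is dominated by `v` but by no other
vertex of `D`. -/
def IsPrivateNbr (G : SimpleGraph V) (D : Set V) (v w : V) : Prop :=
  (w = v ∨ G.Adj v w) ∧ ∀ u ∈ D, u ≠ v → ¬(w = u ∨ G.Adj u w)

/-- The set `PN(v, D)` of `D`-private neighbours of `v`. -/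
def PN (G : SimpleGraph V) (v : V) (D : Set V) : Set V := {w | IsPrivateNbr G D v w}

/-- The set `EPN(v, D) = PN(v, D) − D` of external `D`-private neighbours of `v`. -/
def EPN (G : SimpleGraph V) (v : V) (D : Set V) : Set V := PN G v D \ D

/-- A set `D` is irredundant if every vertex of `D` has a `D`-private neighbour. -/
def Irredundant (G : SimpleGraph V) (D : Set V) : Prop := ∀ v ∈ D, (PN G v D).Nonempty

/-- The upper irredundance number `IR(G)`. -/
noncomputable def IRnum (G : SimpleGraph V) : ℕ :=
  sSup {n | ∃ D : Set V, Irredundant G D ∧ D.ncard = n}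

/-- An `IR(G)`-set: an irredundant set of maximum cardinality `IR(G)`. -/
def IsIRSet (G : SimpleGraph V) (D : Set V) : Prop :=
  Irredundant G D ∧ D.ncard = IRnum G

/-- The `IR`-graph of `G`: vertices are the `IR(G)`-sets, and `D` is adjacent to `D'`
iff `D' = (D − {u}) ∪ {v}` for some `u ∈ D` and `v ∈ D' − {u}` with `uv ∈ E(G)`. -/
def IRGraph (G : SimpleGraph V) [Fintype V] :
    SimpleGraph {D : Set V // IsIRSet G D} where
  Adj D D' := ∃ a b, a ∈ D.1 ∧ b ∈ D'.1 ∧ b ≠ a ∧ G.Adj a b ∧ D'.1 = (D.1 \ {a}) ∪ {b}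
  symm := by
    constructor
    rintro ⟨D, hD⟩ ⟨D', hD'⟩ ⟨a, b, ha, hb, hba, hadj, heq⟩
    dsimp only at ha hb heq ⊢
    have hbD : b ∉ D := by
      intro hbD
      have h1 : D' = D \ {a} := by
        rw [heq]
        ext x
        simp only [Set.mem_union, Set.mem_diff, Set.mem_singleton_iff]
        constructor
        · rintro (h | rfl)
          · exact h
          · exact ⟨hbD, hba⟩
        · exact Or.inl
      have h2 : D'.ncard = D.ncard - 1 := by
        rw [h1, Set.ncard_diff_singleton_of_mem ha]
      have h3 : D.ncard = D'.ncard := by rw [hD.2, hD'.2]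
      have h4 : 0 < D.ncard := (Set.ncard_pos (Set.toFinite D)).2 ⟨a, ha⟩
      omega
    refine ⟨b, a, hb, ha, fun h => hba h.symm, hadj.symm, ?_⟩
    rw [heq]
    ext x
    simp only [Set.mem_union, Set.mem_diff, Set.mem_singleton_iff]
    constructor
    · intro hx
      by_cases hxa : x = a
      · exact Or.inr hxa
      · have hxb : x ≠ b := fun h => hbD (h ▸ hx)
        exact Or.inl ⟨Or.inl ⟨hx, hxa⟩, hxb⟩
    · rintro (⟨(⟨hx, _⟩ | rfl), hxb⟩ | rfl)
      · exact hx
      · exact absurd rfl hxb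
      · exact ha
  loopless := by
    constructor
    rintro ⟨D, hD⟩ ⟨a, b, ha, hb, hba, hadj, heq⟩
    dsimp only at ha hb heq
    have h2 : a ∈ (D \ {a}) ∪ {b} := heq ▸ ha
    rcases h2 with h | h
    · exact h.2 rfl
    · exact hba h.symm

end IRDefs

/-- The double star `S(a,b)`: adjacent centres `Sum.inl false` (with `a` leaves) and
`Sum.inl true` (with `b` leaves). -/
def doubleStar (a b : ℕ) : SimpleGraph (Bool ⊕ (Fin a ⊕ Fin b)) :=
  SimpleGraph.fromRel (fun x y =>
    (x = Sum.inl false ∧ y = Sum.inl true) ∨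
    (∃ i, x = Sum.inl false ∧ y = Sum.inr (Sum.inl i)) ∨
    (∃ j, x = Sum.inl true ∧ y = Sum.inr (Sum.inr j)))

/-- The vertices of the graph `Gₙ`. -/
inductive GVert (n : ℕ) : Type
  | u : GVert n
  | v : GVert n
  | a : Fin n → GVert n
  | b : Fin n → GVert n
  | c : Fin n → GVert n
  | d : Fin n → GVert n
  deriving DecidableEq, Fintype

/-- The graph `Gₙ`: edges `uv`, `u aᵢ` for all `i`, `v bᵢ` for all `i`,
`aᵢ bⱼ` for all `i ≠ j`, and, for each `i`, the 4-cycle `(aᵢ, cᵢ, bᵢ, dᵢ, aᵢ)`. -/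
def Gn (n : ℕ) : SimpleGraph (GVert n) :=
  SimpleGraph.fromRel (fun x y =>
    (x = .u ∧ y = .v) ∨
    (∃ i, x = .u ∧ y = .a i) ∨
    (∃ i, x = .v ∧ y = .b i) ∨
    (∃ i j, i ≠ j ∧ x = .a i ∧ y = .b j) ∨
    (∃ i, x = .a i ∧ y = .c i) ∨
    (∃ i, x = .c i ∧ y = .b i) ∨
    (∃ i, x = .b i ∧ y = .d i) ∨
    (∃ i, x = .d i ∧ y = .a i))

/-- `Sᵢ = {aᵢ, bᵢ, cᵢ, dᵢ}`. -/
def Sset (n : ℕ) (i : Fin n) : Set (GVert n) := {.a i, .b i, .c i, .d i}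

section Work
open GVert
variable {n : ℕ}

/-- domination -/
def Dom (x w : GVert n) : Prop := w = x ∨ (Gn n).Adj x w

lemma dom_symm {x w : GVert n} : Dom x w ↔ Dom w x := by
  unfold Dom
  rw [eq_comm, SimpleGraph.adj_comm]

lemma dom_u {x : GVert n} : Dom x .u ↔ x = .u ∨ x = .v ∨ ∃ i, x = .a i := by
  unfold Dom Gn
  cases x <;> simp [SimpleGraph.fromRel_adj] <;> aesop

lemma dom_v {x : GVert n} : Dom x .v ↔ x = .v ∨ x = .u ∨ ∃ i, x = .b i := by
  unfold Dom Gn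
  cases x <;> simp [SimpleGraph.fromRel_adj] <;> aesop

lemma dom_a {x : GVert n} {i : Fin n} :
    Dom x (.a i) ↔ x = .a i ∨ x = .u ∨ x = .c i ∨ x = .d i ∨ ∃ j, j ≠ i ∧ x = .b j := by
  unfold Dom Gn
  cases x <;> simp [SimpleGraph.fromRel_adj] <;> aesop

lemma dom_b {x : GVert n} {i : Fin n} :
    Dom x (.b i) ↔ x = .b i ∨ x = .v ∨ x = .c i ∨ x = .d i ∨ ∃ j, j ≠ i ∧ x = .a j := by
  unfold Dom Gn
  cases x <;> simp [SimpleGraph.fromRel_adj] <;> aesop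

lemma dom_c {x : GVert n} {i : Fin n} :
    Dom x (.c i) ↔ x = .c i ∨ x = .a i ∨ x = .b i := by
  unfold Dom Gn
  cases x <;> simp [SimpleGraph.fromRel_adj] <;> aesop

lemma dom_d {x : GVert n} {i : Fin n} :
    Dom x (.d i) ↔ x = .d i ∨ x = .a i ∨ x = .b i := by
  unfold Dom Gn
  cases x <;> simp [SimpleGraph.fromRel_adj] <;> aesop

/-! symmetry -/
def sg : GVert n → GVert n
  | .u => .v
  | .v => .u
  | .a i => .b i
  | .b i => .a i
  | .c i => .c i
  | .d i => .d i

lemma sg_sg (x : GVert n) : sg (sg x) = x := by cases x <;> rfl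

lemma sg_inj : Function.Injective (sg : GVert n → GVert n) :=
  Function.LeftInverse.injective sg_sg

lemma mem_sg_image {D : Set (GVert n)} {x : GVert n} : x ∈ sg '' D ↔ sg x ∈ D := by
  constructor
  · rintro ⟨y, hy, rfl⟩; rwa [sg_sg]
  · intro h; exact ⟨sg x, h, sg_sg x⟩

lemma sg_image_image (D : Set (GVert n)) : sg '' (sg '' D) = D := by
  rw [← Set.image_comp]
  have : (sg ∘ sg : GVert n → GVert n) = id := funext sg_sg
  rw [this, Set.image_id]

lemma dom_sg {x w : GVert n} : Dom (sg x) (sg w) ↔ Dom x w := by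
  cases w <;> cases x <;>
    simp [sg, dom_u, dom_v, dom_a, dom_b, dom_c, dom_d, eq_comm]

lemma isPrivateNbr_iff {D : Set (GVert n)} {v w : GVert n} :
    IsPrivateNbr (Gn n) D v w ↔ Dom v w ∧ ∀ u ∈ D, u ≠ v → ¬ Dom u w := Iff.rfl

lemma irred_sg {D : Set (GVert n)} (h : Irredundant (Gn n) D) :
    Irredundant (Gn n) (sg '' D) := by
  rintro _ ⟨x, hx, rfl⟩
  obtain ⟨w, hw1, hw2⟩ := h x hx
  refine ⟨sg w, dom_sg.2 hw1, ?_⟩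
  rintro _ ⟨y, hy, rfl⟩ hne hdom
  exact hw2 y hy (fun e => hne (congrArg sg e)) (dom_sg.1 hdom)

lemma ncard_sg (D : Set (GVert n)) : (sg '' D).ncard = D.ncard :=
  Set.ncard_image_of_injective D sg_inj

/-! the candidate IR-sets -/
def baseU : Set (GVert n) := {x | x = .u ∨ (∃ i, x = .c i) ∨ (∃ i, x = .d i)}

def leafU (i : Fin n) (t : Bool) : Set (GVert n) :=
  insert (.a i) (baseU \ {if t then .c i else .d i})

lemma mem_baseU {x : GVert n} :
    x ∈ baseU ↔ x = .u ∨ (∃ i, x = .c i) ∨ (∃ i, x = .d i) := Iff.rfl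

lemma mem_leafU {x : GVert n} {i : Fin n} {t : Bool} :
    x ∈ leafU i t ↔ x = .a i ∨ (x ∈ baseU ∧ x ≠ (if t then .c i else .d i)) := by
  simp [leafU, Set.mem_insert_iff, Set.mem_diff]

lemma ncard_baseU : (baseU : Set (GVert n)).ncard = 2 * n + 1 := by
  have h : (baseU : Set (GVert n)) =
      Set.range (fun o : Option (Fin n ⊕ Fin n) => o.elim .u (Sum.elim .c .d)) := by
    ext x
    simp only [mem_baseU, Set.mem_range]
    constructor
    · rintro (rfl | ⟨i, rfl⟩ | ⟨i, rfl⟩)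
      exacts [⟨none, rfl⟩, ⟨some (.inl i), rfl⟩, ⟨some (.inr i), rfl⟩]
    · rintro ⟨(_ | (i | i)), rfl⟩ <;> simp
  have hinj : Function.Injective
      (fun o : Option (Fin n ⊕ Fin n) => o.elim .u (Sum.elim .c .d) : _ → GVert n) := by
    rintro (_ | (i | i)) (_ | (j | j)) h <;> simp_all
  rw [h, ← Set.image_univ, Set.ncard_image_of_injective _ hinj, Set.ncard_univ,
    Nat.card_eq_fintype_card]
  simp [Fintype.card_option, Fintype.card_sum]
  ring

lemma ncard_leafU (i : Fin n) (t : Bool) : (leafU i t : Set (GVert n)).ncard = 2 * n + 1 := by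
  have hmem : (if t then GVert.c i else .d i) ∈ (baseU : Set (GVert n)) := by
    cases t <;> simp [mem_baseU]
  have hnot : (GVert.a i) ∉ (baseU : Set (GVert n)) \ {if t then .c i else .d i} := by
    rintro ⟨h, -⟩; rcases mem_baseU.1 h with h | ⟨j, h⟩ | ⟨j, h⟩ <;> simp_all
  rw [leafU, Set.ncard_insert_of_notMem hnot (Set.toFinite _),
    Set.ncard_diff_singleton_of_mem hmem, ncard_baseU]
  omega
/-! membership simp lemmas -/
@[simp] lemma baseU_mem_u : (.u : GVert n) ∈ baseU := Or.inl rfl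
@[simp] lemma baseU_mem_c (i : Fin n) : (.c i : GVert n) ∈ baseU := Or.inr (Or.inl ⟨i, rfl⟩)
@[simp] lemma baseU_mem_d (i : Fin n) : (.d i : GVert n) ∈ baseU := Or.inr (Or.inr ⟨i, rfl⟩)
@[simp] lemma baseU_not_mem_v : (.v : GVert n) ∉ baseU := by
  intro h; rcases mem_baseU.1 h with h | ⟨j, h⟩ | ⟨j, h⟩ <;> simp_all
@[simp] lemma baseU_not_mem_a (i : Fin n) : (.a i : GVert n) ∉ baseU := by
  intro h; rcases mem_baseU.1 h with h | ⟨j, h⟩ | ⟨j, h⟩ <;> simp_all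
@[simp] lemma baseU_not_mem_b (i : Fin n) : (.b i : GVert n) ∉ baseU := by
  intro h; rcases mem_baseU.1 h with h | ⟨j, h⟩ | ⟨j, h⟩ <;> simp_all

@[simp] lemma leafU_mem_u {i : Fin n} {t : Bool} : (.u : GVert n) ∈ leafU i t := by
  cases t <;> simp [mem_leafU]
@[simp] lemma leafU_not_mem_v {i : Fin n} {t : Bool} : (.v : GVert n) ∉ leafU i t := by
  cases t <;> simp [mem_leafU]
@[simp] lemma leafU_mem_a {i j : Fin n} {t : Bool} : (.a j : GVert n) ∈ leafU i t ↔ j = i := by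
  cases t <;> simp [mem_leafU, GVert.a.injEq, eq_comm]
@[simp] lemma leafU_not_mem_b {i j : Fin n} {t : Bool} : (.b j : GVert n) ∉ leafU i t := by
  cases t <;> simp [mem_leafU]
@[simp] lemma leafU_mem_c {i j : Fin n} {t : Bool} :
    (.c j : GVert n) ∈ leafU i t ↔ ¬(t = true ∧ j = i) := by
  cases t <;> simp [mem_leafU, GVert.c.injEq]
@[simp] lemma leafU_mem_d {i j : Fin n} {t : Bool} :
    (.d j : GVert n) ∈ leafU i t ↔ ¬(t = false ∧ j = i) := by
  cases t <;> simp [mem_leafU, GVert.d.injEq]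

/-! irredundance of the candidate sets -/
lemma irred_baseU : Irredundant (Gn n) (baseU : Set (GVert n)) := by
  intro x hx
  rcases mem_baseU.1 hx with rfl | ⟨i, rfl⟩ | ⟨i, rfl⟩
  · refine ⟨.v, dom_v.2 (Or.inr (Or.inl rfl)), fun y hy hne hdom => ?_⟩
    rcases dom_v.1 hdom with rfl | rfl | ⟨j, rfl⟩ <;> simp_all
  · refine ⟨.c i, Or.inl rfl, fun y hy hne hdom => ?_⟩
    rcases dom_c.1 hdom with rfl | rfl | rfl <;> simp_all
  · refine ⟨.d i, Or.inl rfl, fun y hy hne hdom => ?_⟩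
    rcases dom_d.1 hdom with rfl | rfl | rfl <;> simp_all

lemma irred_leafU (i : Fin n) (t : Bool) : Irredundant (Gn n) (leafU i t) := by
  intro x hx
  rcases mem_leafU.1 hx with rfl | ⟨hx', hxne⟩
  · -- x = a i; witness: the removed vertex (c i if t, else d i)
    cases t
    · refine ⟨.d i, dom_d.2 (Or.inr (Or.inl rfl)), fun y hy hne hdom => ?_⟩
      rcases dom_d.1 hdom with rfl | rfl | rfl <;> simp_all
    · refine ⟨.c i, dom_c.2 (Or.inr (Or.inl rfl)), fun y hy hne hdom => ?_⟩
      rcases dom_c.1 hdom with rfl | rfl | rfl <;> simp_all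
  · rcases mem_baseU.1 hx' with rfl | ⟨j, rfl⟩ | ⟨j, rfl⟩
    · -- x = u; witness v
      refine ⟨.v, dom_v.2 (Or.inr (Or.inl rfl)), fun y hy hne hdom => ?_⟩
      rcases dom_v.1 hdom with rfl | rfl | ⟨k, rfl⟩ <;> simp_all
    · -- x = c j
      by_cases hj : j = i
      · -- partner case: c i with a i ∈ D, witness b i
        subst hj
        refine ⟨.b j, dom_b.2 (Or.inr (Or.inr (Or.inl rfl))), fun y hy hne hdom => ?_⟩
        rcases dom_b.1 hdom with rfl | rfl | rfl | rfl | ⟨k, hk, rfl⟩ <;> simp_all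
      · -- self witness
        refine ⟨.c j, Or.inl rfl, fun y hy hne hdom => ?_⟩
        rcases dom_c.1 hdom with rfl | rfl | rfl <;> simp_all
    · by_cases hj : j = i
      · subst hj
        refine ⟨.b j, dom_b.2 (Or.inr (Or.inr (Or.inr (Or.inl rfl)))), fun y hy hne hdom => ?_⟩
        rcases dom_b.1 hdom with rfl | rfl | rfl | rfl | ⟨k, hk, rfl⟩ <;> simp_all
      · refine ⟨.d j, Or.inl rfl, fun y hy hne hdom => ?_⟩
        rcases dom_d.1 hdom with rfl | rfl | rfl <;> simp_all
/-! counting machinery -/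
def fib : GVert n → Option (Fin n)
  | .u => none
  | .v => none
  | .a i => some i
  | .b i => some i
  | .c i => some i
  | .d i => some i

lemma fib_none {x : GVert n} : fib x = none ↔ x = .u ∨ x = .v := by
  cases x <;> simp [fib]

lemma fib_some {x : GVert n} {i : Fin n} :
    fib x = some i ↔ x = .a i ∨ x = .b i ∨ x = .c i ∨ x = .d i := by
  cases x <;> simp [fib]

noncomputable def fibF (D : Set (GVert n)) (o : Option (Fin n)) : Finset (GVert n) :=
  (Set.toFinite D).toFinset.filter (fun x => fib x = o)

lemma mem_fibF {D : Set (GVert n)} {x : GVert n} {o : Option (Fin n)} :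
    x ∈ fibF D o ↔ x ∈ D ∧ fib x = o := by
  simp [fibF, Set.Finite.mem_toFinset]

lemma card_split (D : Set (GVert n)) :
    D.ncard = (fibF D none).card + ∑ i : Fin n, (fibF D (some i)).card := by
  rw [Set.ncard_eq_toFinset_card _ (Set.toFinite D),
    Finset.card_eq_sum_card_fiberwise (f := fib) (t := Finset.univ)
      (fun x _ => Finset.mem_univ _)]
  exact Fintype.sum_option _

/-! triple exclusion lemmas -/
lemma T1 {D : Set (GVert n)} (hirr : Irredundant (Gn n) D) {i : Fin n}
    (ha : .a i ∈ D) (hb : .b i ∈ D) (hc : .c i ∈ D) : False := by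
  obtain ⟨w, hw1, hw2⟩ := hirr _ hc
  rcases dom_c.1 (dom_symm.1 hw1) with rfl | rfl | rfl
  · exact hw2 _ ha (by simp) (dom_c.2 (Or.inr (Or.inl rfl)))
  · exact hw2 _ ha (by simp) (Or.inl rfl)
  · exact hw2 _ hb (by simp) (Or.inl rfl)

lemma T2 {D : Set (GVert n)} (hirr : Irredundant (Gn n) D) {i : Fin n}
    (ha : .a i ∈ D) (hb : .b i ∈ D) (hd : .d i ∈ D) : False := by
  obtain ⟨w, hw1, hw2⟩ := hirr _ hd
  rcases dom_d.1 (dom_symm.1 hw1) with rfl | rfl | rfl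
  · exact hw2 _ ha (by simp) (dom_d.2 (Or.inr (Or.inl rfl)))
  · exact hw2 _ ha (by simp) (Or.inl rfl)
  · exact hw2 _ hb (by simp) (Or.inl rfl)

lemma T3 {D : Set (GVert n)} (hirr : Irredundant (Gn n) D) {i : Fin n}
    (ha : .a i ∈ D) (hc : .c i ∈ D) (hd : .d i ∈ D) : False := by
  obtain ⟨w, hw1, hw2⟩ := hirr _ hc
  rcases dom_c.1 (dom_symm.1 hw1) with rfl | rfl | rfl
  · exact hw2 _ ha (by simp) (dom_c.2 (Or.inr (Or.inl rfl)))
  · exact hw2 _ hd (by simp) (dom_a.2 (Or.inr (Or.inr (Or.inr (Or.inl rfl)))))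
  · exact hw2 _ hd (by simp) (dom_b.2 (Or.inr (Or.inr (Or.inr (Or.inl rfl)))))

lemma T4 {D : Set (GVert n)} (hirr : Irredundant (Gn n) D) {i : Fin n}
    (hb : .b i ∈ D) (hc : .c i ∈ D) (hd : .d i ∈ D) : False := by
  obtain ⟨w, hw1, hw2⟩ := hirr _ hc
  rcases dom_c.1 (dom_symm.1 hw1) with rfl | rfl | rfl
  · exact hw2 _ hb (by simp) (dom_c.2 (Or.inr (Or.inr rfl)))
  · exact hw2 _ hd (by simp) (dom_a.2 (Or.inr (Or.inr (Or.inr (Or.inl rfl)))))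
  · exact hw2 _ hb (by simp) (Or.inl rfl)

lemma T5 {D : Set (GVert n)} (hirr : Irredundant (Gn n) D) {i : Fin n}
    (hu : .u ∈ D) (hb : .b i ∈ D) (hc : .c i ∈ D) : False := by
  obtain ⟨w, hw1, hw2⟩ := hirr _ hc
  rcases dom_c.1 (dom_symm.1 hw1) with rfl | rfl | rfl
  · exact hw2 _ hb (by simp) (dom_c.2 (Or.inr (Or.inr rfl)))
  · exact hw2 _ hu (by simp) (dom_a.2 (Or.inr (Or.inl rfl)))
  · exact hw2 _ hb (by simp) (Or.inl rfl)

lemma T6 {D : Set (GVert n)} (hirr : Irredundant (Gn n) D) {i : Fin n}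
    (hu : .u ∈ D) (hb : .b i ∈ D) (hd : .d i ∈ D) : False := by
  obtain ⟨w, hw1, hw2⟩ := hirr _ hd
  rcases dom_d.1 (dom_symm.1 hw1) with rfl | rfl | rfl
  · exact hw2 _ hb (by simp) (dom_d.2 (Or.inr (Or.inr rfl)))
  · exact hw2 _ hu (by simp) (dom_a.2 (Or.inr (Or.inl rfl)))
  · exact hw2 _ hb (by simp) (Or.inl rfl)

/-! fiber bounds -/
lemma fibF_some_le_two {D : Set (GVert n)} (hirr : Irredundant (Gn n) D) (i : Fin n) :
    (fibF D (some i)).card ≤ 2 := by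
  by_contra h
  push_neg at h
  obtain ⟨x, y, z, hx, hy, hz, hxy, hxz, hyz⟩ := Finset.two_lt_card_iff.1 h
  obtain ⟨hxD, hxf⟩ := mem_fibF.1 hx
  obtain ⟨hyD, hyf⟩ := mem_fibF.1 hy
  obtain ⟨hzD, hzf⟩ := mem_fibF.1 hz
  have key : (GVert.a i ∈ D ∧ .b i ∈ D ∧ .c i ∈ D) ∨ (GVert.a i ∈ D ∧ .b i ∈ D ∧ .d i ∈ D)
      ∨ (GVert.a i ∈ D ∧ .c i ∈ D ∧ .d i ∈ D) ∨ (GVert.b i ∈ D ∧ .c i ∈ D ∧ .d i ∈ D) := by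
    rcases fib_some.1 hxf with rfl | rfl | rfl | rfl <;>
      rcases fib_some.1 hyf with rfl | rfl | rfl | rfl <;>
      rcases fib_some.1 hzf with rfl | rfl | rfl | rfl <;>
      simp_all <;> tauto
  rcases key with ⟨h1, h2, h3⟩ | ⟨h1, h2, h3⟩ | ⟨h1, h2, h3⟩ | ⟨h1, h2, h3⟩
  exacts [T1 hirr h1 h2 h3, T2 hirr h1 h2 h3, T3 hirr h1 h2 h3, T4 hirr h1 h2 h3]

lemma fibF_none_le_two (D : Set (GVert n)) : (fibF D none).card ≤ 2 := by
  have h : fibF D none ⊆ {.u, .v} := by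
    intro x hx
    rcases fib_none.1 (mem_fibF.1 hx).2 with rfl | rfl <;> simp
  exact (Finset.card_le_card h).trans (by
    exact (Finset.card_insert_le _ _).trans (by simp))

/-! the u,v exclusion -/
lemma uv_constraint {D : Set (GVert n)} (hirr : Irredundant (Gn n) D)
    (hu : .u ∈ D) (hv : .v ∈ D) :
    ∃ i : Fin n, (∀ x ∈ D, fib x = some i → x = .b i) ∧ ∀ j, j ≠ i → .b j ∉ D := by
  obtain ⟨w, hw1, hw2⟩ := hirr _ hu
  rcases dom_u.1 (dom_symm.1 hw1) with rfl | rfl | ⟨i, rfl⟩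
  · exact absurd (dom_u.2 (Or.inr (Or.inl rfl))) (hw2 _ hv (by simp))
  · exact absurd (Or.inl rfl) (hw2 _ hv (by simp))
  · refine ⟨i, ?_, ?_⟩
    · intro x hxD hxf
      rcases fib_some.1 hxf with rfl | rfl | rfl | rfl
      · exact absurd (Or.inl rfl) (hw2 _ hxD (by simp))
      · rfl
      · exact absurd (dom_a.2 (Or.inr (Or.inr (Or.inl rfl)))) (hw2 _ hxD (by simp))
      · exact absurd (dom_a.2 (Or.inr (Or.inr (Or.inr (Or.inl rfl))))) (hw2 _ hxD (by simp))
    · intro j hj hbj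
      exact hw2 _ hbj (by simp) (dom_a.2 (Or.inr (Or.inr (Or.inr (Or.inr ⟨j, hj, rfl⟩)))))

lemma uv_constraint' {D : Set (GVert n)} (hirr : Irredundant (Gn n) D)
    (hu : .u ∈ D) (hv : .v ∈ D) :
    ∃ i : Fin n, (∀ x ∈ D, fib x = some i → x = .a i) ∧ ∀ j, j ≠ i → .a j ∉ D := by
  obtain ⟨w, hw1, hw2⟩ := hirr _ hv
  rcases dom_v.1 (dom_symm.1 hw1) with rfl | rfl | ⟨i, rfl⟩
  · exact absurd (dom_v.2 (Or.inr (Or.inl rfl))) (hw2 _ hu (by simp))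
  · exact absurd (Or.inl rfl) (hw2 _ hu (by simp))
  · refine ⟨i, ?_, ?_⟩
    · intro x hxD hxf
      rcases fib_some.1 hxf with rfl | rfl | rfl | rfl
      · rfl
      · exact absurd (Or.inl rfl) (hw2 _ hxD (by simp))
      · exact absurd (dom_b.2 (Or.inr (Or.inr (Or.inl rfl)))) (hw2 _ hxD (by simp))
      · exact absurd (dom_b.2 (Or.inr (Or.inr (Or.inr (Or.inl rfl))))) (hw2 _ hxD (by simp))
    · intro j hj haj
      exact hw2 _ haj (by simp) (dom_b.2 (Or.inr (Or.inr (Or.inr (Or.inr ⟨j, hj, rfl⟩)))))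
lemma sum_fib_le {D : Set (GVert n)} (hirr : Irredundant (Gn n) D) :
    ∑ j : Fin n, (fibF D (some j)).card ≤ 2 * n :=
  calc ∑ j : Fin n, (fibF D (some j)).card ≤ Finset.univ.card • 2 :=
      Finset.sum_le_card_nsmul _ _ _ (fun j _ => fibF_some_le_two hirr j)
  _ = 2 * n := by simp [mul_comm]

lemma uv_bound {D : Set (GVert n)} (hirr : Irredundant (Gn n) D)
    (hu : .u ∈ D) (hv : .v ∈ D) : D.ncard ≤ 2 * n := by
  obtain ⟨i, hi1, _⟩ := uv_constraint hirr hu hv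
  obtain ⟨k, hk1, _⟩ := uv_constraint' hirr hu hv
  have hnone := fibF_none_le_two D
  rw [card_split D]
  by_cases hik : i = k
  · subst hik
    have hfi : (fibF D (some i)).card = 0 := by
      rw [Finset.card_eq_zero, Finset.eq_empty_iff_forall_notMem]
      intro x hx
      obtain ⟨hxD, hxf⟩ := mem_fibF.1 hx
      have h1 := hi1 x hxD hxf
      have h2 := hk1 x hxD hxf
      rw [h1] at h2
      exact (by simp : (GVert.b i : GVert n) ≠ .a i) h2
    have hsum : ∑ j : Fin n, (fibF D (some j)).card ≤ 2 * (n - 1) := by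
      rw [← Finset.add_sum_erase _ _ (Finset.mem_univ i), hfi, zero_add]
      calc ∑ j ∈ Finset.univ.erase i, (fibF D (some j)).card
          ≤ (Finset.univ.erase i).card • 2 :=
            Finset.sum_le_card_nsmul _ _ _ (fun j _ => fibF_some_le_two hirr j)
        _ = 2 * (n - 1) := by
            rw [Finset.card_erase_of_mem (Finset.mem_univ i), Finset.card_univ,
              Fintype.card_fin, smul_eq_mul, mul_comm]
    have hn : 0 < n := i.pos
    omega
  · have hn : 2 ≤ n := by
      have h1 := i.isLt
      have h2 := k.isLt
      have h3 : i.val ≠ k.val := fun h => hik (Fin.ext h)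
      omega
    have hfi : (fibF D (some i)).card ≤ 1 := by
      refine (Finset.card_le_card (fun x hx => ?_)).trans (Finset.card_singleton (GVert.b i)).le
      obtain ⟨hxD, hxf⟩ := mem_fibF.1 hx
      simp [hi1 x hxD hxf]
    have hfk : (fibF D (some k)).card ≤ 1 := by
      refine (Finset.card_le_card (fun x hx => ?_)).trans (Finset.card_singleton (GVert.a k)).le
      obtain ⟨hxD, hxf⟩ := mem_fibF.1 hx
      simp [hk1 x hxD hxf]
    have hkmem : k ∈ Finset.univ.erase i := Finset.mem_erase.2 ⟨Ne.symm hik, Finset.mem_univ k⟩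
    have hsum : ∑ j : Fin n, (fibF D (some j)).card ≤ 1 + (1 + 2 * (n - 2)) := by
      rw [← Finset.add_sum_erase _ _ (Finset.mem_univ i),
        ← Finset.add_sum_erase _ _ hkmem]
      have hrest : ∑ j ∈ (Finset.univ.erase i).erase k, (fibF D (some j)).card
          ≤ 2 * (n - 2) := by
        calc ∑ j ∈ (Finset.univ.erase i).erase k, (fibF D (some j)).card
            ≤ ((Finset.univ.erase i).erase k).card • 2 :=
              Finset.sum_le_card_nsmul _ _ _ (fun j _ => fibF_some_le_two hirr j)
          _ = 2 * (n - 2) := by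
              rw [Finset.card_erase_of_mem hkmem,
                Finset.card_erase_of_mem (Finset.mem_univ i), Finset.card_univ,
                Fintype.card_fin, smul_eq_mul, mul_comm]
              omega
      omega
    omega

lemma ncard_le_IR {D : Set (GVert n)} (hirr : Irredundant (Gn n) D) :
    D.ncard ≤ 2 * n + 1 := by
  by_cases hu : (.u : GVert n) ∈ D
  · by_cases hv : (.v : GVert n) ∈ D
    · exact (uv_bound hirr hu hv).trans (by omega)
    · have hnone : (fibF D none).card ≤ 1 := by
        refine (Finset.card_le_card (fun x hx => ?_)).trans
          (Finset.card_singleton (GVert.u : GVert n)).le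
        obtain ⟨hxD, hxf⟩ := mem_fibF.1 hx
        rcases fib_none.1 hxf with rfl | rfl
        · simp
        · exact absurd hxD hv
      have := sum_fib_le hirr
      rw [card_split D]
      omega
  · have hnone : (fibF D none).card ≤ 1 := by
      refine (Finset.card_le_card (fun x hx => ?_)).trans
        (Finset.card_singleton (GVert.v : GVert n)).le
      obtain ⟨hxD, hxf⟩ := mem_fibF.1 hx
      rcases fib_none.1 hxf with rfl | rfl
      · exact absurd hxD hu
      · simp
    have := sum_fib_le hirr
    rw [card_split D]
    omega

lemma irnum_eq : IRnum (Gn n) = 2 * n + 1 := by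
  apply le_antisymm
  · refine csSup_le ⟨0, ∅, fun x hx => absurd hx (Set.notMem_empty x), by simp⟩ ?_
    rintro m ⟨D, hD, rfl⟩
    exact ncard_le_IR hD
  · refine le_csSup ⟨2 * n + 1, ?_⟩ ⟨baseU, irred_baseU, ncard_baseU⟩
    rintro m ⟨D, hD, rfl⟩
    exact ncard_le_IR hD
/-! characterization lemmas -/
lemma Tab {D : Set (GVert n)} (hirr : Irredundant (Gn n) D) (hu : .u ∈ D) {i j : Fin n}
    (hai : .a i ∈ D) (hbj : .b j ∈ D)
    (hacd : ∀ k : Fin n, (GVert.a k ∈ D ∨ .c k ∈ D ∨ .d k ∈ D)) : False := by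
  obtain ⟨w, hw1, hw2⟩ := hirr _ hu
  rcases dom_u.1 (dom_symm.1 hw1) with rfl | rfl | ⟨k, rfl⟩
  · exact hw2 _ hai (by simp) (dom_u.2 (Or.inr (Or.inr ⟨i, rfl⟩)))
  · exact hw2 _ hbj (by simp) (dom_v.2 (Or.inr (Or.inr ⟨j, rfl⟩)))
  · rcases hacd k with h | h | h
    · exact hw2 _ h (by simp) (Or.inl rfl)
    · exact hw2 _ h (by simp) (dom_a.2 (Or.inr (Or.inr (Or.inl rfl))))
    · exact hw2 _ h (by simp) (dom_a.2 (Or.inr (Or.inr (Or.inr (Or.inl rfl)))))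

lemma Pc {D : Set (GVert n)} (hirr : Irredundant (Gn n) D) (hu : .u ∈ D) {i : Fin n}
    (hai : .a i ∈ D) (hci : .c i ∈ D) {j : Fin n} (hj : j ≠ i) (haj : .a j ∈ D) : False := by
  obtain ⟨w, hw1, hw2⟩ := hirr _ hci
  rcases dom_c.1 (dom_symm.1 hw1) with rfl | rfl | rfl
  · exact hw2 _ hai (by simp) (dom_c.2 (Or.inr (Or.inl rfl)))
  · exact hw2 _ hu (by simp) (dom_a.2 (Or.inr (Or.inl rfl)))
  · exact hw2 _ haj (by simp) (dom_b.2 (Or.inr (Or.inr (Or.inr (Or.inr ⟨j, hj, rfl⟩)))))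

lemma Pd {D : Set (GVert n)} (hirr : Irredundant (Gn n) D) (hu : .u ∈ D) {i : Fin n}
    (hai : .a i ∈ D) (hdi : .d i ∈ D) {j : Fin n} (hj : j ≠ i) (haj : .a j ∈ D) : False := by
  obtain ⟨w, hw1, hw2⟩ := hirr _ hdi
  rcases dom_d.1 (dom_symm.1 hw1) with rfl | rfl | rfl
  · exact hw2 _ hai (by simp) (dom_d.2 (Or.inr (Or.inl rfl)))
  · exact hw2 _ hu (by simp) (dom_a.2 (Or.inr (Or.inl rfl)))
  · exact hw2 _ haj (by simp) (dom_b.2 (Or.inr (Or.inr (Or.inr (Or.inr ⟨j, hj, rfl⟩)))))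

lemma char_u {D : Set (GVert n)} (hirr : Irredundant (Gn n) D) (hcard : D.ncard = 2 * n + 1)
    (hu : .u ∈ D) (hv : .v ∉ D) :
    D = baseU ∨ ∃ i t, D = leafU i t := by
  have hnone : (fibF D none).card = 1 := by
    have h : fibF D none = {GVert.u} := by
      ext x
      simp only [mem_fibF, Finset.mem_singleton]
      constructor
      · rintro ⟨hxD, hxf⟩
        rcases fib_none.1 hxf with rfl | rfl
        · rfl
        · exact absurd hxD hv
      · rintro rfl; exact ⟨hu, rfl⟩
    rw [h, Finset.card_singleton]
  have hsum : ∑ j : Fin n, (fibF D (some j)).card = 2 * n := by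
    rw [card_split D] at hcard; omega
  have hall : ∀ i : Fin n, (fibF D (some i)).card = 2 := by
    intro i
    by_contra h
    have h1 : (fibF D (some i)).card ≤ 1 := by have := fibF_some_le_two hirr i; omega
    have h2 : ∑ j : Fin n, (fibF D (some j)).card ≤ 1 + 2 * (n - 1) := by
      rw [← Finset.add_sum_erase _ _ (Finset.mem_univ i)]
      have h3 : ∑ j ∈ Finset.univ.erase i, (fibF D (some j)).card ≤ 2 * (n - 1) := by
        calc ∑ j ∈ Finset.univ.erase i, (fibF D (some j)).card
            ≤ (Finset.univ.erase i).card • 2 :=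
              Finset.sum_le_card_nsmul _ _ _ (fun j _ => fibF_some_le_two hirr j)
          _ = 2 * (n - 1) := by
              rw [Finset.card_erase_of_mem (Finset.mem_univ i), Finset.card_univ,
                Fintype.card_fin, smul_eq_mul, mul_comm]
      omega
    have := i.pos
    omega
  have pair : ∀ i : Fin n, ∃ x y : GVert n,
      x ∈ D ∧ y ∈ D ∧ x ≠ y ∧ fib x = some i ∧ fib y = some i := by
    intro i
    have h2 : 1 < (fibF D (some i)).card := by rw [hall i]; omega
    obtain ⟨x, hx, y, hy, hxy⟩ := Finset.one_lt_card.1 h2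
    exact ⟨x, y, (mem_fibF.1 hx).1, (mem_fibF.1 hy).1, hxy, (mem_fibF.1 hx).2,
      (mem_fibF.1 hy).2⟩
  have hacd : ∀ k : Fin n, (GVert.a k ∈ D ∨ .c k ∈ D ∨ .d k ∈ D) := by
    intro k
    obtain ⟨x, y, hxD, hyD, hxy, hxf, hyf⟩ := pair k
    rcases fib_some.1 hxf with rfl | rfl | rfl | rfl <;>
      rcases fib_some.1 hyf with rfl | rfl | rfl | rfl <;> simp_all <;> tauto
  have hbnot : ∀ i : Fin n, (GVert.b i : GVert n) ∉ D := by
    intro i hbi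
    rcases hacd i with h | h | h
    · exact Tab hirr hu h hbi hacd
    · exact T5 hirr hu hbi h
    · exact T6 hirr hu hbi h
  have hcd : ∀ i : Fin n, (GVert.a i : GVert n) ∉ D → (GVert.c i ∈ D ∧ GVert.d i ∈ D) := by
    intro i hai
    obtain ⟨x, y, hxD, hyD, hxy, hxf, hyf⟩ := pair i
    rcases fib_some.1 hxf with rfl | rfl | rfl | rfl <;>
      rcases fib_some.1 hyf with rfl | rfl | rfl | rfl <;> simp_all [hbnot]
  by_cases hA : ∃ i : Fin n, (GVert.a i : GVert n) ∈ D
  · obtain ⟨i, hai⟩ := hA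
    have hone : (GVert.c i ∈ D ∧ GVert.d i ∉ D) ∨ (GVert.d i ∈ D ∧ GVert.c i ∉ D) := by
      have hnot3 : ¬(GVert.c i ∈ D ∧ GVert.d i ∈ D) := fun h => T3 hirr hai h.1 h.2
      obtain ⟨x, y, hxD, hyD, hxy, hxf, hyf⟩ := pair i
      have hcord : GVert.c i ∈ D ∨ GVert.d i ∈ D := by
        rcases fib_some.1 hxf with rfl | rfl | rfl | rfl <;>
          rcases fib_some.1 hyf with rfl | rfl | rfl | rfl <;> simp_all [hbnot] <;> tauto
      tauto
    rcases hone with ⟨hci, hdi⟩ | ⟨hdi, hci⟩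
    · -- D = leafU i false  (contains a i, c i; d i removed)
      right
      refine ⟨i, false, ?_⟩
      ext x
      cases x with
      | u => simp [hu]
      | v => simp [hv]
      | a j =>
        simp only [leafU_mem_a]
        constructor
        · intro h
          by_contra hne
          exact Pc hirr hu hai hci hne h
        · rintro rfl; exact hai
      | b j => simp [hbnot j]
      | c j =>
        by_cases hji : j = i
        · subst hji; simp [hci]
        · have h : GVert.c j ∈ D := (hcd j (fun h => Pc hirr hu hai hci hji h)).1
          simp [h]
      | d j =>
        by_cases hji : j = i
        · subst hji; simp [hdi]
        · have h : GVert.d j ∈ D := (hcd j (fun h => Pc hirr hu hai hci hji h)).2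
          simp [h, hji]
    · -- D = leafU i true  (contains a i, d i; c i removed)
      right
      refine ⟨i, true, ?_⟩
      ext x
      cases x with
      | u => simp [hu]
      | v => simp [hv]
      | a j =>
        simp only [leafU_mem_a]
        constructor
        · intro h
          by_contra hne
          exact Pd hirr hu hai hdi hne h
        · rintro rfl; exact hai
      | b j => simp [hbnot j]
      | c j =>
        by_cases hji : j = i
        · subst hji; simp [hci]
        · have h : GVert.c j ∈ D := (hcd j (fun h => Pd hirr hu hai hdi hji h)).1
          simp [h, hji]
      | d j =>
        by_cases hji : j = i
        · subst hji; simp [hdi]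
        · have h : GVert.d j ∈ D := (hcd j (fun h => Pd hirr hu hai hdi hji h)).2
          simp [h]
  · left
    push_neg at hA
    ext x
    cases x with
    | u => simp [hu]
    | v => simp [hv]
    | a j => simp [hA j]
    | b j => simp [hbnot j]
    | c j => simp [(hcd j (hA j)).1]
    | d j => simp [(hcd j (hA j)).2]

lemma char {D : Set (GVert n)} (hirr : Irredundant (Gn n) D) (hcard : D.ncard = 2 * n + 1) :
    D = baseU ∨ (∃ i t, D = leafU i t) ∨ D = sg '' baseU ∨ ∃ i t, D = sg '' leafU i t := by
  have hEx : (.u : GVert n) ∈ D ∨ (.v : GVert n) ∈ D := by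
    by_contra h
    push_neg at h
    have h0 : (fibF D none).card = 0 := by
      rw [Finset.card_eq_zero, Finset.eq_empty_iff_forall_notMem]
      intro x hx
      obtain ⟨hxD, hxf⟩ := mem_fibF.1 hx
      rcases fib_none.1 hxf with rfl | rfl
      · exact h.1 hxD
      · exact h.2 hxD
    have h1 := sum_fib_le hirr
    rw [card_split D] at hcard
    omega
  have hnotboth : ¬((.u : GVert n) ∈ D ∧ (.v : GVert n) ∈ D) := by
    rintro ⟨h1, h2⟩
    have := uv_bound hirr h1 h2
    omega
  rcases hEx with hu | hv
  · have hv : (.v : GVert n) ∉ D := fun h => hnotboth ⟨hu, h⟩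
    rcases char_u hirr hcard hu hv with h | h
    · exact Or.inl h
    · exact Or.inr (Or.inl h)
  · have hu : (.u : GVert n) ∉ D := fun h => hnotboth ⟨h, hv⟩
    have h2 : Irredundant (Gn n) (sg '' D) := irred_sg hirr
    have h3 : (sg '' D).ncard = 2 * n + 1 := by rw [ncard_sg]; exact hcard
    have hu' : (.u : GVert n) ∈ sg '' D := mem_sg_image.2 hv
    have hv' : (.v : GVert n) ∉ sg '' D := fun h => hu (mem_sg_image.1 h)
    rcases char_u h2 h3 hu' hv' with h | ⟨i, t, h⟩
    · right; right; left
      rw [← h, sg_image_image]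
    · right; right; right
      exact ⟨i, t, by rw [← h, sg_image_image]⟩
/-! the family of IR-sets, indexed -/
abbrev Idx (n : ℕ) := Bool ⊕ ((Fin n × Bool) ⊕ (Fin n × Bool))

def Fam : Idx n → Set (GVert n)
  | .inl false => baseU
  | .inl true => sg '' baseU
  | .inr (.inl (i, t)) => leafU i t
  | .inr (.inr (i, t)) => sg '' leafU i t

lemma isIRSet_iff {D : Set (GVert n)} :
    IsIRSet (Gn n) D ↔ Irredundant (Gn n) D ∧ D.ncard = 2 * n + 1 := by
  rw [IsIRSet, irnum_eq]

@[simp] lemma sg_u : (sg .u : GVert n) = .v := rfl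
@[simp] lemma sg_v : (sg .v : GVert n) = .u := rfl
@[simp] lemma sg_a {i : Fin n} : (sg (.a i) : GVert n) = .b i := rfl
@[simp] lemma sg_b {i : Fin n} : (sg (.b i) : GVert n) = .a i := rfl
@[simp] lemma sg_c {i : Fin n} : (sg (.c i) : GVert n) = .c i := rfl
@[simp] lemma sg_d {i : Fin n} : (sg (.d i) : GVert n) = .d i := rfl

@[simp] lemma ex_sg {S : Set (GVert n)} {y : GVert n} :
    (∃ x ∈ S, sg x = y) ↔ sg y ∈ S := by
  constructor
  · rintro ⟨x, hx, rfl⟩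
    rwa [sg_sg]
  · intro h
    exact ⟨sg y, h, sg_sg y⟩

@[simp] lemma sgmem_u {S : Set (GVert n)} : GVert.u ∈ sg '' S ↔ GVert.v ∈ S := mem_sg_image
@[simp] lemma sgmem_v {S : Set (GVert n)} : GVert.v ∈ sg '' S ↔ GVert.u ∈ S := mem_sg_image
@[simp] lemma sgmem_a {S : Set (GVert n)} {i : Fin n} : GVert.a i ∈ sg '' S ↔ GVert.b i ∈ S :=
  mem_sg_image
@[simp] lemma sgmem_b {S : Set (GVert n)} {i : Fin n} : GVert.b i ∈ sg '' S ↔ GVert.a i ∈ S :=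
  mem_sg_image
@[simp] lemma sgmem_c {S : Set (GVert n)} {i : Fin n} : GVert.c i ∈ sg '' S ↔ GVert.c i ∈ S :=
  mem_sg_image
@[simp] lemma sgmem_d {S : Set (GVert n)} {i : Fin n} : GVert.d i ∈ sg '' S ↔ GVert.d i ∈ S :=
  mem_sg_image

lemma fam_isIRSet (p : Idx n) : IsIRSet (Gn n) (Fam p) := by
  rcases p with (_ | _) | (⟨i, t⟩ | ⟨i, t⟩)
  · exact isIRSet_iff.2 ⟨irred_baseU, ncard_baseU⟩
  · exact isIRSet_iff.2 ⟨irred_sg irred_baseU, by show (sg '' baseU).ncard = _; rw [ncard_sg, ncard_baseU]⟩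
  · exact isIRSet_iff.2 ⟨irred_leafU i t, ncard_leafU i t⟩
  · exact isIRSet_iff.2 ⟨irred_sg (irred_leafU i t),
      by show (sg '' leafU i t).ncard = _; rw [ncard_sg, ncard_leafU]⟩

lemma fam_inj : Function.Injective (Fam : Idx n → Set (GVert n)) := by
  rintro p q h
  rw [Set.ext_iff] at h
  rcases p with (_ | _) | (⟨i, s⟩ | ⟨i, s⟩) <;> rcases q with (_ | _) | (⟨j, r⟩ | ⟨j, r⟩) <;>
    simp only [Fam] at h
  · rfl
  · exact absurd (sgmem_u.1 ((h .u).1 baseU_mem_u)) baseU_not_mem_v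
  · exact absurd ((h (.a j)).2 (leafU_mem_a.2 rfl)) (baseU_not_mem_a j)
  · exact absurd ((h .v).2 (sgmem_v.2 leafU_mem_u)) baseU_not_mem_v
  · exact absurd (sgmem_u.1 ((h .u).2 baseU_mem_u)) baseU_not_mem_v
  · rfl
  · exact absurd (sgmem_u.1 ((h .u).2 leafU_mem_u)) baseU_not_mem_v
  · exact absurd (sgmem_b.1 ((h (.b j)).2 (sgmem_b.2 (leafU_mem_a.2 rfl)))) (baseU_not_mem_a j)
  · exact absurd ((h (.a i)).1 (leafU_mem_a.2 rfl)) (baseU_not_mem_a i)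
  · exact absurd (sgmem_u.1 ((h .u).1 leafU_mem_u)) baseU_not_mem_v
  · have hij : i = j := leafU_mem_a.1 ((h (.a i)).1 (leafU_mem_a.2 rfl))
    subst hij
    have hsr : s = r := by
      cases s <;> cases r
      · rfl
      · exact absurd (h (GVert.d i)) (by simp)
      · exact absurd (h (GVert.d i)) (by simp)
      · rfl
    subst hsr; rfl
  · exact absurd (sgmem_u.1 ((h .u).1 leafU_mem_u)) leafU_not_mem_v
  · exact absurd ((h .v).1 (sgmem_v.2 leafU_mem_u)) baseU_not_mem_v
  · exact absurd (sgmem_b.1 ((h (.b i)).1 (sgmem_b.2 (leafU_mem_a.2 rfl)))) (baseU_not_mem_a i)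
  · exact absurd (sgmem_u.1 ((h .u).2 leafU_mem_u)) leafU_not_mem_v
  · have hij : i = j :=
      leafU_mem_a.1 (sgmem_b.1 ((h (.b i)).1 (sgmem_b.2 (leafU_mem_a.2 rfl))))
    subst hij
    have hsr : s = r := by
      have hd := h (GVert.d i)
      rw [sgmem_d, sgmem_d] at hd
      cases s <;> cases r
      · rfl
      · exact absurd hd (by simp)
      · exact absurd hd (by simp)
      · rfl
    subst hsr; rfl

/-! adjacency and non-adjacency facts in Gn -/
lemma adj_uv : (Gn n).Adj .u .v := by simp [Gn, SimpleGraph.fromRel_adj]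
lemma adj_ca {i : Fin n} : (Gn n).Adj (.c i) (.a i) := by simp [Gn, SimpleGraph.fromRel_adj]
lemma adj_da {i : Fin n} : (Gn n).Adj (.d i) (.a i) := by simp [Gn, SimpleGraph.fromRel_adj]
lemma adj_cb {i : Fin n} : (Gn n).Adj (.c i) (.b i) := by simp [Gn, SimpleGraph.fromRel_adj]
lemma adj_db {i : Fin n} : (Gn n).Adj (.d i) (.b i) := by simp [Gn, SimpleGraph.fromRel_adj]
lemma nadj_ub {j : Fin n} : ¬ (Gn n).Adj .u (.b j) := by simp [Gn, SimpleGraph.fromRel_adj]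
lemma nadj_va {j : Fin n} : ¬ (Gn n).Adj .v (.a j) := by simp [Gn, SimpleGraph.fromRel_adj]
lemma nadj_aa {i j : Fin n} : ¬ (Gn n).Adj (.a i) (.a j) := by simp [Gn, SimpleGraph.fromRel_adj]
lemma nadj_bb {i j : Fin n} : ¬ (Gn n).Adj (.b i) (.b j) := by simp [Gn, SimpleGraph.fromRel_adj]
lemma nadj_cd {i j : Fin n} : ¬ (Gn n).Adj (.c i) (.d j) := by simp [Gn, SimpleGraph.fromRel_adj]
lemma nadj_dc {i j : Fin n} : ¬ (Gn n).Adj (.d i) (.c j) := by simp [Gn, SimpleGraph.fromRel_adj]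

lemma irgraph_adj {D D' : {S : Set (GVert n) // IsIRSet (Gn n) S}} :
    (IRGraph (Gn n)).Adj D D' ↔
      ∃ a b, a ∈ D.1 ∧ b ∈ D'.1 ∧ b ≠ a ∧ (Gn n).Adj a b ∧ D'.1 = (D.1 \ {a}) ∪ {b} :=
  Iff.rfl

lemma not_adj_of_wits {D D' : {S : Set (GVert n) // IsIRSet (Gn n) S}}
    {w w' : GVert n} (hw : w ∈ D.1) (hw' : w ∉ D'.1) (hw2 : w' ∈ D'.1) (hw2' : w' ∉ D.1)
    (hna : ¬ (Gn n).Adj w w') : ¬ (IRGraph (Gn n)).Adj D D' := by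
  rintro ⟨a, b, ha, hb, hba, hadj, heq⟩
  have hwa : w = a := by
    by_contra hne
    exact hw' (by rw [heq]; exact Or.inl ⟨hw, hne⟩)
  have hw'b : w' = b := by
    have h2 := hw2
    rw [heq] at h2
    rcases h2 with h | h
    · exact absurd h.1 hw2'
    · exact h
  subst hwa; subst hw'b
  exact hna hadj
/-! set equalities for the swap moves -/
lemma E1 : (sg '' baseU : Set (GVert n)) = (baseU \ {GVert.u}) ∪ {GVert.v} := by
  ext x
  cases x <;> simp

lemma E2 (i : Fin n) (t : Bool) :
    leafU i t = (baseU \ {if t then GVert.c i else GVert.d i}) ∪ {GVert.a i} := by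
  rw [Set.union_singleton]; rfl

lemma E3 (i : Fin n) (t : Bool) :
    (sg '' leafU i t : Set (GVert n)) =
      ((sg '' baseU) \ {if t then GVert.c i else GVert.d i}) ∪ {GVert.b i} := by
  ext x
  cases x <;> cases t <;> simp [eq_comm]

/-! the index graph -/
def dsIdx (n : ℕ) : SimpleGraph (Idx n) := SimpleGraph.fromRel (fun x y =>
  (x = .inl false ∧ y = .inl true) ∨
  (∃ p, x = .inl false ∧ y = .inr (.inl p)) ∨
  (∃ p, x = .inl true ∧ y = .inr (.inr p)))

def F (p : Idx n) : {D : Set (GVert n) // IsIRSet (Gn n) D} := ⟨Fam p, fam_isIRSet p⟩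

/-! positive adjacency constructions -/
lemma C1 : (IRGraph (Gn n)).Adj (F (.inl false)) (F (.inl true)) :=
  ⟨.u, .v, baseU_mem_u, sgmem_v.2 baseU_mem_u, by simp, adj_uv, E1⟩

lemma C2 (j : Fin n) (r : Bool) :
    (IRGraph (Gn n)).Adj (F (.inl false)) (F (.inr (.inl (j, r)))) := by
  refine ⟨if r then .c j else .d j, .a j, ?_, leafU_mem_a.2 rfl, ?_, ?_, E2 j r⟩
  · cases r <;> simp [F, Fam]
  · cases r <;> simp [F, Fam]
  · cases r
    · exact adj_da
    · exact adj_ca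

lemma C3 (j : Fin n) (r : Bool) :
    (IRGraph (Gn n)).Adj (F (.inl true)) (F (.inr (.inr (j, r)))) := by
  refine ⟨if r then .c j else .d j, .b j, ?_, sgmem_b.2 (leafU_mem_a.2 rfl), ?_, ?_, E3 j r⟩
  · cases r <;> simp [F, Fam]
  · cases r <;> simp [F, Fam]
  · cases r
    · exact adj_db
    · exact adj_cb

lemma dsIdx_centers : (dsIdx n).Adj (.inl false) (.inl true) := by
  simp [dsIdx, SimpleGraph.fromRel_adj]

lemma dsIdx_leafL (j : Fin n) (r : Bool) :
    (dsIdx n).Adj (.inl false) (.inr (.inl (j, r))) := by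
  rw [dsIdx, SimpleGraph.fromRel_adj]
  exact ⟨by simp, Or.inl (Or.inr (Or.inl ⟨(j, r), rfl, rfl⟩))⟩

lemma dsIdx_leafR (j : Fin n) (r : Bool) :
    (dsIdx n).Adj (.inl true) (.inr (.inr (j, r))) := by
  rw [dsIdx, SimpleGraph.fromRel_adj]
  exact ⟨by simp, Or.inl (Or.inr (Or.inr ⟨(j, r), rfl, rfl⟩))⟩

/-! the master adjacency iff -/
lemma adj_iff (p q : Idx n) :
    (IRGraph (Gn n)).Adj (F p) (F q) ↔ (dsIdx n).Adj p q := by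
  rcases p with (_ | _) | (⟨i, s⟩ | ⟨i, s⟩) <;> rcases q with (_ | _) | (⟨j, r⟩ | ⟨j, r⟩)
  · exact iff_of_false (SimpleGraph.irrefl _) (SimpleGraph.irrefl _)
  · exact iff_of_true C1 dsIdx_centers
  · exact iff_of_true (C2 j r) (dsIdx_leafL j r)
  · refine iff_of_false (not_adj_of_wits (w := .u) (w' := .b j) baseU_mem_u ?_ ?_ ?_ nadj_ub)
      (by simp [dsIdx, SimpleGraph.fromRel_adj])
    · simp [F, Fam]
    · exact sgmem_b.2 (leafU_mem_a.2 rfl)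
    · simp [F, Fam]
  · rw [SimpleGraph.adj_comm]
    exact iff_of_true C1 dsIdx_centers.symm
  · exact iff_of_false (SimpleGraph.irrefl _) (SimpleGraph.irrefl _)
  · refine iff_of_false (not_adj_of_wits (w := .v) (w' := .a j) (sgmem_v.2 baseU_mem_u) ?_
      (leafU_mem_a.2 rfl) ?_ nadj_va) (by simp [dsIdx, SimpleGraph.fromRel_adj])
    · simp [F, Fam]
    · simp [F, Fam]
  · exact iff_of_true (C3 j r) (dsIdx_leafR j r)
  · rw [SimpleGraph.adj_comm]
    exact iff_of_true (C2 i s) (dsIdx_leafL i s).symm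
  · refine iff_of_false (not_adj_of_wits (w := .a i) (w' := .v) (leafU_mem_a.2 rfl) ?_
      (sgmem_v.2 baseU_mem_u) ?_ (fun h => nadj_va h.symm))
      (by simp [dsIdx, SimpleGraph.fromRel_adj])
    · simp [F, Fam]
    · simp [F, Fam]
  · -- leaf vs leaf
    by_cases hij : i = j
    · subst hij
      by_cases hsr : s = r
      · subst hsr
        exact iff_of_false (SimpleGraph.irrefl _) (SimpleGraph.irrefl _)
      · refine iff_of_false ?_ (by simp [dsIdx, SimpleGraph.fromRel_adj])
        cases s <;> cases r <;> try exact absurd rfl hsr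
        · -- s = false (has c i), r = true (has d i)
          exact not_adj_of_wits (w := .c i) (w' := .d i) (by simp [F, Fam]) (by simp [F, Fam]) (by simp [F, Fam])
            (by simp [F, Fam]) nadj_cd
        · exact not_adj_of_wits (w := .d i) (w' := .c i) (by simp [F, Fam]) (by simp [F, Fam]) (by simp [F, Fam])
            (by simp [F, Fam]) nadj_dc
    · refine iff_of_false (not_adj_of_wits (w := .a i) (w' := .a j) (leafU_mem_a.2 rfl) ?_
        (leafU_mem_a.2 rfl) ?_ nadj_aa) (by simp [dsIdx, SimpleGraph.fromRel_adj])
      · simp [F, Fam, hij]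
      · simp only [F, Fam, leafU_mem_a]
        exact Ne.symm hij
  · refine iff_of_false (not_adj_of_wits (w := .u) (w' := .b j) leafU_mem_u ?_ ?_ ?_ nadj_ub)
      (by simp [dsIdx, SimpleGraph.fromRel_adj])
    · simp [F, Fam]
    · exact sgmem_b.2 (leafU_mem_a.2 rfl)
    · simp [F, Fam]
  · refine iff_of_false (not_adj_of_wits (w := .b i) (w' := .u)
      (sgmem_b.2 (leafU_mem_a.2 rfl)) ?_ baseU_mem_u ?_ (fun h => nadj_ub h.symm))
      (by simp [dsIdx, SimpleGraph.fromRel_adj])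
    · simp [F, Fam]
    · simp [F, Fam]
  · rw [SimpleGraph.adj_comm]
    exact iff_of_true (C3 i s) (dsIdx_leafR i s).symm
  · refine iff_of_false (not_adj_of_wits (w := .b i) (w' := .u)
      (sgmem_b.2 (leafU_mem_a.2 rfl)) ?_ leafU_mem_u ?_ (fun h => nadj_ub h.symm))
      (by simp [dsIdx, SimpleGraph.fromRel_adj])
    · simp [F, Fam]
    · simp [F, Fam]
  · -- sg leaf vs sg leaf
    by_cases hij : i = j
    · subst hij
      by_cases hsr : s = r
      · subst hsr
        exact iff_of_false (SimpleGraph.irrefl _) (SimpleGraph.irrefl _)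
      · refine iff_of_false ?_ (by simp [dsIdx, SimpleGraph.fromRel_adj])
        cases s <;> cases r <;> try exact absurd rfl hsr
        · exact not_adj_of_wits (w := .c i) (w' := .d i) (by simp [F, Fam]) (by simp [F, Fam]) (by simp [F, Fam])
            (by simp [F, Fam]) nadj_cd
        · exact not_adj_of_wits (w := .d i) (w' := .c i) (by simp [F, Fam]) (by simp [F, Fam]) (by simp [F, Fam])
            (by simp [F, Fam]) nadj_dc
    · refine iff_of_false (not_adj_of_wits (w := .b i) (w' := .b j)
        (sgmem_b.2 (leafU_mem_a.2 rfl)) ?_ (sgmem_b.2 (leafU_mem_a.2 rfl)) ?_ nadj_bb)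
        (by simp [dsIdx, SimpleGraph.fromRel_adj])
      · simp [F, Fam, hij]
      · exact fun hm => hij (Eq.symm (leafU_mem_a.1 (sgmem_b.1 hm)))

/-! assembling the isomorphism -/
noncomputable def famEquiv : Idx n ≃ {D : Set (GVert n) // IsIRSet (Gn n) D} :=
  Equiv.ofBijective F
    ⟨fun p q h => fam_inj (congrArg Subtype.val h), by
      rintro ⟨D, hD⟩
      rw [isIRSet_iff] at hD
      rcases char hD.1 hD.2 with h | ⟨i, t, h⟩ | h | ⟨i, t, h⟩
      exacts [⟨.inl false, Subtype.ext h.symm⟩, ⟨.inr (.inl (i, t)), Subtype.ext h.symm⟩,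
        ⟨.inl true, Subtype.ext h.symm⟩, ⟨.inr (.inr (i, t)), Subtype.ext h.symm⟩]⟩

noncomputable def iso1 : dsIdx n ≃g IRGraph (Gn n) where
  toEquiv := famEquiv
  map_rel_iff' := @fun p q => adj_iff p q

def eqv1 : Fin n × Bool ≃ Fin (2 * n) :=
  ((Equiv.prodCongr (Equiv.refl (Fin n)) finTwoEquiv.symm).trans finProdFinEquiv).trans
    (finCongr (by ring))

def gEquiv : Idx n ≃ (Bool ⊕ (Fin (2 * n) ⊕ Fin (2 * n))) :=
  Equiv.sumCongr (Equiv.refl Bool) (Equiv.sumCongr eqv1 eqv1)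

def iso2 : dsIdx n ≃g doubleStar (2 * n) (2 * n) where
  toEquiv := gEquiv
  map_rel_iff' := by
    rintro ((_ | _) | (⟨a1, b1⟩ | ⟨a1, b1⟩)) ((_ | _) | (⟨a2, b2⟩ | ⟨a2, b2⟩)) <;>
      simp [gEquiv, doubleStar, dsIdx, SimpleGraph.fromRel_adj, Equiv.sumCongr_apply,
        Sum.map] <;>
      first
        | exact ⟨a2, by cases b2 <;> simp⟩
        | exact ⟨a1, by cases b1 <;> simp⟩
        | skip

end Work

/-- For every `n ≥ 1`, the `IR`-graph of `Gₙ` is isomorphic to the double star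
`S(2n, 2n)`. -/
theorem statement1 (n : ℕ) (hn : 1 ≤ n) :
    Nonempty (IRGraph (Gn n) ≃g doubleStar (2 * n) (2 * n)) :=
  ⟨((iso1 (n := n)).symm.trans (iso2 (n := n)))⟩
end

section
/- For every integer n ≥ 1, the upper irredundance number of G_n equals 2n + 1, i.e., IR(G_n) = 2n + 1. -/
open SimpleGraph

section GnMain
variable {n : ℕ}

lemma adj_c {i : Fin n} {x : GVert n} : (Gn n).Adj x (.c i) ↔ x = .a i ∨ x = .b i := by
  cases x <;> simp [Gn, SimpleGraph.fromRel_adj] <;> aesop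
lemma adj_d {i : Fin n} {x : GVert n} : (Gn n).Adj x (.d i) ↔ x = .a i ∨ x = .b i := by
  cases x <;> simp [Gn, SimpleGraph.fromRel_adj] <;> aesop
lemma adj_a {i : Fin n} {x : GVert n} : (Gn n).Adj x (.a i) ↔ x = .u ∨ x = .c i ∨ x = .d i ∨ ∃ j, j ≠ i ∧ x = .b j := by
  cases x <;> simp [Gn, SimpleGraph.fromRel_adj] <;> aesop
lemma adj_b {i : Fin n} {x : GVert n} : (Gn n).Adj x (.b i) ↔ x = .v ∨ x = .c i ∨ x = .d i ∨ ∃ j, j ≠ i ∧ x = .a j := by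
  cases x <;> simp [Gn, SimpleGraph.fromRel_adj] <;> aesop
lemma adj_u {x : GVert n} : (Gn n).Adj x (.u) ↔ x = .v ∨ ∃ i, x = .a i := by
  cases x <;> simp [Gn, SimpleGraph.fromRel_adj] <;> aesop

variable {D : Set (GVert n)}

lemma T1_s2 (h : Irredundant (Gn n) D) (i : Fin n) :
    ¬(GVert.a i ∈ D ∧ GVert.b i ∈ D ∧ GVert.c i ∈ D) := by
  rintro ⟨ha, hb, hc⟩
  obtain ⟨w, hw1, hw2⟩ := h _ hc
  rcases hw1 with rfl | hadj
  · exact hw2 _ ha (by simp) (Or.inr (adj_c.mpr (Or.inl rfl)))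
  · rcases adj_c.mp hadj.symm with rfl | rfl
    · exact hw2 _ ha (by simp) (Or.inl rfl)
    · exact hw2 _ hb (by simp) (Or.inl rfl)

lemma T2_s2 (h : Irredundant (Gn n) D) (i : Fin n) :
    ¬(GVert.a i ∈ D ∧ GVert.b i ∈ D ∧ GVert.d i ∈ D) := by
  rintro ⟨ha, hb, hd⟩
  obtain ⟨w, hw1, hw2⟩ := h _ hd
  rcases hw1 with rfl | hadj
  · exact hw2 _ ha (by simp) (Or.inr (adj_d.mpr (Or.inl rfl)))
  · rcases adj_d.mp hadj.symm with rfl | rfl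
    · exact hw2 _ ha (by simp) (Or.inl rfl)
    · exact hw2 _ hb (by simp) (Or.inl rfl)

lemma T3_s2 (h : Irredundant (Gn n) D) (i : Fin n) :
    ¬(GVert.a i ∈ D ∧ GVert.c i ∈ D ∧ GVert.d i ∈ D) := by
  rintro ⟨ha, hc, hd⟩
  obtain ⟨w, hw1, hw2⟩ := h _ hc
  rcases hw1 with rfl | hadj
  · exact hw2 _ ha (by simp) (Or.inr (adj_c.mpr (Or.inl rfl)))
  · rcases adj_c.mp hadj.symm with rfl | rfl
    · exact hw2 _ ha (by simp) (Or.inl rfl)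
    · exact hw2 _ hd (by simp) (Or.inr (adj_b.mpr (Or.inr (Or.inr (Or.inl rfl)))))

lemma T4_s2 (h : Irredundant (Gn n) D) (i : Fin n) :
    ¬(GVert.b i ∈ D ∧ GVert.c i ∈ D ∧ GVert.d i ∈ D) := by
  rintro ⟨hb, hc, hd⟩
  obtain ⟨w, hw1, hw2⟩ := h _ hc
  rcases hw1 with rfl | hadj
  · exact hw2 _ hb (by simp) (Or.inr (adj_c.mpr (Or.inr rfl)))
  · rcases adj_c.mp hadj.symm with rfl | rfl
    · exact hw2 _ hd (by simp) (Or.inr (adj_a.mpr (Or.inr (Or.inr (Or.inl rfl)))))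
    · exact hw2 _ hb (by simp) (Or.inl rfl)

lemma TUV (h : Irredundant (Gn n) D) (hu : GVert.u ∈ D) (hv : GVert.v ∈ D)
    (hA : ∀ i : Fin n, GVert.a i ∈ D ∨ GVert.c i ∈ D ∨ GVert.d i ∈ D) : False := by
  obtain ⟨w, hw1, hw2⟩ := h _ hu
  rcases hw1 with rfl | hadj
  · exact hw2 _ hv (by simp) (Or.inr (adj_u.mpr (Or.inl rfl)))
  · rcases adj_u.mp hadj.symm with rfl | ⟨i, rfl⟩
    · exact hw2 _ hv (by simp) (Or.inl rfl)
    · rcases hA i with ha | hc | hd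
      · exact hw2 _ ha (by simp) (Or.inl rfl)
      · exact hw2 _ hc (by simp) (Or.inr (adj_a.mpr (Or.inr (Or.inl rfl))))
      · exact hw2 _ hd (by simp) (Or.inr (adj_a.mpr (Or.inr (Or.inr (Or.inl rfl)))))

/-- index map -/
def idx : GVert n → Option (Fin n)
  | .u => none
  | .v => none
  | .a i => some i
  | .b i => some i
  | .c i => some i
  | .d i => some i

open Finset in
lemma sum_le_aux {α : Type*} [Fintype α] [DecidableEq α] (f : α → ℕ) (k0 : α)
    (h0 : f k0 ≤ 1) (h2 : ∀ k, f k ≤ 2) :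
    ∑ k, f k ≤ 2 * Fintype.card α - 1 := by
  rw [← Finset.sum_erase_add _ _ (Finset.mem_univ k0)]
  have h3 : ∑ k ∈ Finset.univ.erase k0, f k ≤ ∑ k ∈ Finset.univ.erase k0, 2 :=
    Finset.sum_le_sum fun k _ => h2 k
  rw [Finset.sum_const, smul_eq_mul, Finset.card_erase_of_mem (Finset.mem_univ k0),
    Finset.card_univ] at h3
  have h4 : 1 ≤ Fintype.card α := Fintype.card_pos_iff.mpr ⟨k0⟩
  omega

lemma upper (hD : Irredundant (Gn n) D) : D.ncard ≤ 2 * n + 1 := by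
  classical
  have hfin : D.Finite := D.toFinite
  set T : Finset (GVert n) := hfin.toFinset with hT
  have hcard : D.ncard = T.card := by
    rw [Set.ncard_eq_toFinset_card _ hfin]
  have hsplit : T.card = ∑ k : Option (Fin n), (T.filter fun x => idx x = k).card :=
    Finset.card_eq_sum_card_fiberwise (fun x _ => Finset.mem_univ _)
  -- fiber descriptions
  have hfib_none : (T.filter fun x => idx x = none) =
      ({GVert.u, GVert.v} : Finset (GVert n)).filter (· ∈ D) := by
    ext x
    cases x <;> simp [idx, hT, Set.Finite.mem_toFinset] <;> tauto
  have hfib_some : ∀ i : Fin n, (T.filter fun x => idx x = some i) =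
      ({GVert.a i, GVert.b i, GVert.c i, GVert.d i} : Finset (GVert n)).filter (· ∈ D) := by
    intro i
    ext x
    cases x <;> simp [idx, hT, Set.Finite.mem_toFinset] <;> aesop
  have hquad : ∀ i : Fin n,
      (({GVert.a i, GVert.b i, GVert.c i, GVert.d i} : Finset (GVert n)).filter (· ∈ D)).card =
      (if GVert.a i ∈ D then 1 else 0) + (if GVert.b i ∈ D then 1 else 0) +
      (if GVert.c i ∈ D then 1 else 0) + (if GVert.d i ∈ D then 1 else 0) := by
    intro i
    rw [Finset.card_filter, Finset.sum_insert (by simp), Finset.sum_insert (by simp),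
      Finset.sum_insert (by simp), Finset.sum_singleton]
    ring
  have hpair : (({GVert.u, GVert.v} : Finset (GVert n)).filter (· ∈ D)).card =
      (if GVert.u ∈ D then 1 else 0) + (if GVert.v ∈ D then 1 else 0) := by
    rw [Finset.card_filter, Finset.sum_insert (by simp), Finset.sum_singleton]
  have hle2 : ∀ k : Option (Fin n), (T.filter fun x => idx x = k).card ≤ 2 := by
    rintro (_ | i)
    · rw [hfib_none, hpair]; split_ifs <;> omega
    · rw [hfib_some i, hquad i]
      have t1 := T1_s2 hD i; have t2 := T2_s2 hD i; have t3 := T3_s2 hD i; have t4 := T4_s2 hD i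
      split_ifs <;> first | omega | tauto
  have hk0 : ∃ k0 : Option (Fin n), (T.filter fun x => idx x = k0).card ≤ 1 := by
    by_cases hA : ∀ i : Fin n, GVert.a i ∈ D ∨ GVert.c i ∈ D ∨ GVert.d i ∈ D
    · refine ⟨none, ?_⟩
      rw [hfib_none, hpair]
      have huv : ¬(GVert.u ∈ D ∧ GVert.v ∈ D) := fun ⟨hu, hv⟩ => TUV hD hu hv hA
      split_ifs <;> first | omega | tauto
    · push_neg at hA
      obtain ⟨i, ha, hc, hd⟩ := hA
      refine ⟨some i, ?_⟩
      rw [hfib_some i, hquad i]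
      split_ifs <;> first | omega | tauto
  obtain ⟨k0, hk0⟩ := hk0
  have := sum_le_aux (fun k => (T.filter fun x => idx x = k).card) k0 hk0 hle2
  simp only [Fintype.card_option, Fintype.card_fin] at this
  rw [hcard, hsplit]
  omega

/-- the irredundant set of size 2n+1 -/
def D0 (n : ℕ) : Set (GVert n) :=
  {GVert.u} ∪ Set.range GVert.c ∪ Set.range GVert.d

lemma D0_irr : Irredundant (Gn n) (D0 n) := by
  intro x hx
  refine ⟨x, Or.inl rfl, ?_⟩
  intro y hy hne hcon
  rcases hcon with rfl | hadj
  · exact hne rfl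
  · simp only [D0, Set.mem_union, Set.mem_singleton_iff, Set.mem_range] at hx
    rcases hx with (rfl | ⟨i, rfl⟩) | ⟨i, rfl⟩
    · rcases adj_u.mp hadj with rfl | ⟨i, rfl⟩ <;>
        simp [D0, Set.mem_union, Set.mem_range] at hy
    · rcases adj_c.mp hadj with rfl | rfl <;>
        simp [D0, Set.mem_union, Set.mem_range] at hy
    · rcases adj_d.mp hadj with rfl | rfl <;>
        simp [D0, Set.mem_union, Set.mem_range] at hy

lemma D0_card : (D0 n).ncard = 2 * n + 1 := by
  have hinjc : Function.Injective (GVert.c : Fin n → GVert n) := fun i j h => by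
    simpa using h
  have hinjd : Function.Injective (GVert.d : Fin n → GVert n) := fun i j h => by
    simpa using h
  have hd1 : Disjoint ({GVert.u} : Set (GVert n)) (Set.range GVert.c) := by
    rw [Set.disjoint_left]; rintro x rfl ⟨i, hi⟩; simp at hi
  have hd2 : Disjoint (({GVert.u} : Set (GVert n)) ∪ Set.range GVert.c) (Set.range GVert.d) := by
    rw [Set.disjoint_left]
    rintro x (rfl | ⟨i, rfl⟩) ⟨j, hj⟩ <;> simp at hj
  have hrc : (Set.range (GVert.c : Fin n → GVert n)).ncard = n := by
    rw [← Set.image_univ, Set.ncard_image_of_injective _ hinjc, Set.ncard_univ]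
    simp
  have hrd : (Set.range (GVert.d : Fin n → GVert n)).ncard = n := by
    rw [← Set.image_univ, Set.ncard_image_of_injective _ hinjd, Set.ncard_univ]
    simp
  rw [D0, Set.ncard_union_eq hd2 (Set.toFinite _) (Set.toFinite _),
    Set.ncard_union_eq hd1 (Set.toFinite _) (Set.toFinite _),
    Set.ncard_singleton, hrc, hrd]
  ring

end GnMain

/-- For every `n ≥ 1`, `IR(Gₙ) = 2n + 1`. -/
theorem statement2 (n : ℕ) (hn : 1 ≤ n) : IRnum (Gn n) = 2 * n + 1 := by
  have hub : ∀ m ∈ {m | ∃ D : Set (GVert n), Irredundant (Gn n) D ∧ D.ncard = m},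
      m ≤ 2 * n + 1 := by
    rintro m ⟨D, hD, rfl⟩
    exact upper hD
  have hmem : 2 * n + 1 ∈ {m | ∃ D : Set (GVert n), Irredundant (Gn n) D ∧ D.ncard = m} :=
    ⟨D0 n, D0_irr, D0_card⟩
  refine le_antisymm (csSup_le ⟨_, hmem⟩ hub) (le_csSup ⟨2 * n + 1, hub⟩ hmem)
end

section
/- For every integer n ≥ 1 and every irredundant set X of the graph G_n, one has |X ∩ S_i| ≤ 2 for each i = 1, ..., n. -/
open SimpleGraph

lemma adjac (n : ℕ) (i : Fin n) : (Gn n).Adj (.a i) (.c i) := by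
  simp [Gn]
lemma adjad (n : ℕ) (i : Fin n) : (Gn n).Adj (.a i) (.d i) := by
  simp [Gn]
lemma adjbc (n : ℕ) (i : Fin n) : (Gn n).Adj (.b i) (.c i) := by
  simp [Gn]
lemma adjbd (n : ℕ) (i : Fin n) : (Gn n).Adj (.b i) (.d i) := by
  simp [Gn]
lemma nbr_c {n : ℕ} {i : Fin n} {y : GVert n} (h : (Gn n).Adj (.c i) y) :
    y = .a i ∨ y = .b i := by
  simp [Gn] at h
  aesop
lemma nbr_d {n : ℕ} {i : Fin n} {y : GVert n} (h : (Gn n).Adj (.d i) y) :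
    y = .a i ∨ y = .b i := by
  simp [Gn] at h
  aesop

lemma no_pn {n : ℕ} {X : Set (GVert n)} (hX : Irredundant (Gn n) X) (w : GVert n)
    (hw : w ∈ X)
    (hdom : ∀ y, (y = w ∨ (Gn n).Adj w y) →
      ∃ x ∈ X, x ≠ w ∧ (y = x ∨ (Gn n).Adj x y)) : False := by
  obtain ⟨y, hy1, hy2⟩ := hX w hw
  obtain ⟨x, hx, hxw, hxy⟩ := hdom y hy1
  exact hy2 x hx hxw hxy

lemma ncard_pair_le {α : Type*} (x y : α) : ({x, y} : Set α).ncard ≤ 2 :=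
  (Set.ncard_insert_le x {y}).trans (by simp)

/-- For every `n ≥ 1` and every irredundant set `X` of `Gₙ`,
`|X ∩ Sᵢ| ≤ 2` for each `i`. -/
theorem statement3 (n : ℕ) (hn : 1 ≤ n) (X : Set (GVert n))
    (hX : Irredundant (Gn n) X) (i : Fin n) :
    (X ∩ Sset n i).ncard ≤ 2 := by
  by_cases ha : GVert.a i ∈ X <;> by_cases hb : GVert.b i ∈ X <;>
    by_cases hc : GVert.c i ∈ X <;> by_cases hd : GVert.d i ∈ X
  all_goals
    first
    | -- a, b, c ∈ X : c has no private neighbour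
      (have ha : GVert.a i ∈ X := ha
       have hb : GVert.b i ∈ X := hb
       have hc : GVert.c i ∈ X := hc
       exact (no_pn hX (GVert.c i) hc (fun y hy => by
        rcases hy with rfl | hy
        · exact ⟨GVert.a i, ha, by simp, Or.inr (adjac n i)⟩
        · rcases nbr_c hy with rfl | rfl
          · exact ⟨GVert.a i, ha, by simp, Or.inl rfl⟩
          · exact ⟨GVert.b i, hb, by simp, Or.inl rfl⟩)).elim)
    | -- a, b, d ∈ X : d has no private neighbour
      (have ha : GVert.a i ∈ X := ha
       have hb : GVert.b i ∈ X := hb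
       have hd : GVert.d i ∈ X := hd
       exact (no_pn hX (GVert.d i) hd (fun y hy => by
        rcases hy with rfl | hy
        · exact ⟨GVert.a i, ha, by simp, Or.inr (adjad n i)⟩
        · rcases nbr_d hy with rfl | rfl
          · exact ⟨GVert.a i, ha, by simp, Or.inl rfl⟩
          · exact ⟨GVert.b i, hb, by simp, Or.inl rfl⟩)).elim)
    | -- a, c, d ∈ X : c has no private neighbour
      (have ha : GVert.a i ∈ X := ha
       have hc : GVert.c i ∈ X := hc
       have hd : GVert.d i ∈ X := hd
       exact (no_pn hX (GVert.c i) hc (fun y hy => by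
        rcases hy with rfl | hy
        · exact ⟨GVert.a i, ha, by simp, Or.inr (adjac n i)⟩
        · rcases nbr_c hy with rfl | rfl
          · exact ⟨GVert.a i, ha, by simp, Or.inl rfl⟩
          · exact ⟨GVert.d i, hd, by simp, Or.inr ((adjbd n i).symm)⟩)).elim)
    | -- b, c, d ∈ X : c has no private neighbour
      (have hb : GVert.b i ∈ X := hb
       have hc : GVert.c i ∈ X := hc
       have hd : GVert.d i ∈ X := hd
       exact (no_pn hX (GVert.c i) hc (fun y hy => by
        rcases hy with rfl | hy
        · exact ⟨GVert.b i, hb, by simp, Or.inr (adjbc n i)⟩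
        · rcases nbr_c hy with rfl | rfl
          · exact ⟨GVert.d i, hd, by simp, Or.inr ((adjad n i).symm)⟩
          · exact ⟨GVert.b i, hb, by simp, Or.inl rfl⟩)).elim)
    | (refine le_trans (Set.ncard_le_ncard ?_ (Set.toFinite {GVert.a i, GVert.b i}))
          (ncard_pair_le _ _)
       rintro z ⟨hz1, hz2⟩
       simp only [Sset, Set.mem_insert_iff, Set.mem_singleton_iff] at hz2 ⊢
       rcases hz2 with rfl | rfl | rfl | rfl <;> tauto)
    | (refine le_trans (Set.ncard_le_ncard ?_ (Set.toFinite {GVert.a i, GVert.c i}))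
          (ncard_pair_le _ _)
       rintro z ⟨hz1, hz2⟩
       simp only [Sset, Set.mem_insert_iff, Set.mem_singleton_iff] at hz2 ⊢
       rcases hz2 with rfl | rfl | rfl | rfl <;> tauto)
    | (refine le_trans (Set.ncard_le_ncard ?_ (Set.toFinite {GVert.a i, GVert.d i}))
          (ncard_pair_le _ _)
       rintro z ⟨hz1, hz2⟩
       simp only [Sset, Set.mem_insert_iff, Set.mem_singleton_iff] at hz2 ⊢
       rcases hz2 with rfl | rfl | rfl | rfl <;> tauto)
    | (refine le_trans (Set.ncard_le_ncard ?_ (Set.toFinite {GVert.b i, GVert.c i}))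
          (ncard_pair_le _ _)
       rintro z ⟨hz1, hz2⟩
       simp only [Sset, Set.mem_insert_iff, Set.mem_singleton_iff] at hz2 ⊢
       rcases hz2 with rfl | rfl | rfl | rfl <;> tauto)
    | (refine le_trans (Set.ncard_le_ncard ?_ (Set.toFinite {GVert.b i, GVert.d i}))
          (ncard_pair_le _ _)
       rintro z ⟨hz1, hz2⟩
       simp only [Sset, Set.mem_insert_iff, Set.mem_singleton_iff] at hz2 ⊢
       rcases hz2 with rfl | rfl | rfl | rfl <;> tauto)
    | (refine le_trans (Set.ncard_le_ncard ?_ (Set.toFinite {GVert.c i, GVert.d i}))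
          (ncard_pair_le _ _)
       rintro z ⟨hz1, hz2⟩
       simp only [Sset, Set.mem_insert_iff, Set.mem_singleton_iff] at hz2 ⊢
       rcases hz2 with rfl | rfl | rfl | rfl <;> tauto)
end

section
/- For every integer n ≥ 1 and every irredundant set X of the graph G_n with {u,v} ⊆ X, one has |X| ≤ 2n. -/
open SimpleGraph

/-- For every `n ≥ 1` and every irredundant set `X` of `Gₙ` with `{u, v} ⊆ X`,
`|X| ≤ 2n`. -/
theorem statement4 (n : ℕ) (hn : 1 ≤ n) (X : Set (GVert n))
    (hX : Irredundant (Gn n) X) (hu : GVert.u ∈ X) (hv : GVert.v ∈ X) :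
    X.ncard ≤ 2 * n := by
  -- private neighbour of u is some a i
  obtain ⟨wu, hdomu, hprivu⟩ := hX GVert.u hu
  obtain ⟨wv, hdomv, hprivv⟩ := hX GVert.v hv
  have hvu := hprivu GVert.v hv (by simp)
  have huv := hprivv GVert.u hu (by simp)
  push_neg at hvu huv
  obtain ⟨i, rfl⟩ : ∃ i, wu = GVert.a i := by
    rcases hdomu with rfl | h
    · exact absurd (by simp [Gn] : (Gn n).Adj GVert.v GVert.u) hvu.2
    · cases wu with
      | u => exact absurd h (Gn n).irrefl
      | v => exact absurd rfl hvu.1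
      | a i => exact ⟨i, rfl⟩
      | b i => simp [Gn] at h
      | c i => simp [Gn] at h
      | d i => simp [Gn] at h
  obtain ⟨j, rfl⟩ : ∃ j, wv = GVert.b j := by
    rcases hdomv with rfl | h
    · exact absurd (by simp [Gn] : (Gn n).Adj GVert.u GVert.v) huv.2
    · cases wv with
      | v => exact absurd h (Gn n).irrefl
      | u => exact absurd rfl huv.1
      | a i => simp [Gn] at h
      | b i => exact ⟨i, rfl⟩
      | c i => simp [Gn] at h
      | d i => simp [Gn] at h
  have hai : GVert.a i ∉ X := fun h => hprivu _ h (by simp) (Or.inl rfl)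
  have hci : GVert.c i ∉ X := fun h => hprivu _ h (by simp) (Or.inr (by simp [Gn]))
  have hdi : GVert.d i ∉ X := fun h => hprivu _ h (by simp) (Or.inr (by simp [Gn]))
  have hbk : ∀ k, k ≠ i → GVert.b k ∉ X := fun k hk h =>
    hprivu _ h (by simp) (Or.inr (by simp [Gn]; tauto))
  have hbj : GVert.b j ∉ X := fun h => hprivv _ h (by simp) (Or.inl rfl)
  have hcj : GVert.c j ∉ X := fun h => hprivv _ h (by simp) (Or.inr (by simp [Gn]))
  have hdj : GVert.d j ∉ X := fun h => hprivv _ h (by simp) (Or.inr (by simp [Gn]))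
  have hak : ∀ k, k ≠ j → GVert.a k ∉ X := fun k hk h =>
    hprivv _ h (by simp) (Or.inr (by simp [Gn]; tauto))
  by_cases hij : i = j
  · subst hij
    set S : Finset (GVert n) :=
      insert GVert.u (insert GVert.v
        (((Finset.univ.erase i).image (GVert.c (n := n))) ∪
         ((Finset.univ.erase i).image (GVert.d (n := n))))) with hS
    have hsub : X ⊆ ↑S := by
      intro x hx
      cases x with
      | u => simp [hS]
      | v => simp [hS]
      | a k =>
        rcases eq_or_ne k i with rfl | hk
        · exact absurd hx hai
        · exact absurd hx (hak k hk)
      | b k =>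
        rcases eq_or_ne k i with rfl | hk
        · exact absurd hx hbj
        · exact absurd hx (hbk k hk)
      | c k =>
        rcases eq_or_ne k i with rfl | hk
        · exact absurd hx hci
        · simp [hS, Finset.mem_image, hk]
      | d k =>
        rcases eq_or_ne k i with rfl | hk
        · exact absurd hx hdi
        · simp [hS, Finset.mem_image, hk]
    have hcard : S.card ≤ 2 * n := by
      calc S.card ≤ (insert GVert.v
          (((Finset.univ.erase i).image (GVert.c (n := n))) ∪
           ((Finset.univ.erase i).image (GVert.d (n := n))))).card + 1 :=
            Finset.card_insert_le _ _
        _ ≤ (((Finset.univ.erase i).image (GVert.c (n := n))) ∪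
           ((Finset.univ.erase i).image (GVert.d (n := n)))).card + 1 + 1 := by
            have := Finset.card_insert_le GVert.v
              (((Finset.univ.erase i).image (GVert.c (n := n))) ∪
               ((Finset.univ.erase i).image (GVert.d (n := n))))
            omega
        _ ≤ 2 * n := by
            have h1 := Finset.card_union_le
              ((Finset.univ.erase i).image (GVert.c (n := n)))
              ((Finset.univ.erase i).image (GVert.d (n := n)))
            have h2 := Finset.card_image_le (s := Finset.univ.erase i) (f := GVert.c (n := n))
            have h3 := Finset.card_image_le (s := Finset.univ.erase i) (f := GVert.d (n := n))
            have h4 : (Finset.univ.erase i).card = n - 1 := by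
              rw [Finset.card_erase_of_mem (Finset.mem_univ i)]
              simp
            omega
    calc X.ncard ≤ (↑S : Set (GVert n)).ncard := Set.ncard_le_ncard hsub (Set.toFinite _)
      _ = S.card := Set.ncard_coe_finset S
      _ ≤ 2 * n := hcard
  · have hn2 : 2 ≤ n := by
      by_contra h
      interval_cases n
      exact hij (Subsingleton.elim i j)
    set E : Finset (Fin n) := (Finset.univ.erase i).erase j with hE
    set S : Finset (GVert n) :=
      insert GVert.u (insert GVert.v (insert (GVert.a j) (insert (GVert.b i)
        ((E.image (GVert.c (n := n))) ∪ (E.image (GVert.d (n := n))))))) with hS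
    have hsub : X ⊆ ↑S := by
      intro x hx
      cases x with
      | u => simp [hS]
      | v => simp [hS]
      | a k =>
        rcases eq_or_ne k j with rfl | hk
        · simp [hS]
        · exact absurd hx (hak k hk)
      | b k =>
        rcases eq_or_ne k i with rfl | hk
        · simp [hS]
        · exact absurd hx (hbk k hk)
      | c k =>
        rcases eq_or_ne k i with rfl | hki
        · exact absurd hx hci
        · rcases eq_or_ne k j with rfl | hkj
          · exact absurd hx hcj
          · simp [hS, hE, Finset.mem_image, hki, hkj]
      | d k =>
        rcases eq_or_ne k i with rfl | hki
        · exact absurd hx hdi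
        · rcases eq_or_ne k j with rfl | hkj
          · exact absurd hx hdj
          · simp [hS, hE, Finset.mem_image, hki, hkj]
    have hEcard : E.card = n - 2 := by
      rw [hE, Finset.card_erase_of_mem, Finset.card_erase_of_mem (Finset.mem_univ i)]
      · simp; omega
      · simp [Ne.symm hij]
    have hcard : S.card ≤ 2 * n := by
      have h0 := Finset.card_insert_le GVert.u (insert GVert.v (insert (GVert.a j) (insert (GVert.b i)
        ((E.image (GVert.c (n := n))) ∪ (E.image (GVert.d (n := n)))))))
      have h1 := Finset.card_insert_le GVert.v (insert (GVert.a j) (insert (GVert.b i)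
        ((E.image (GVert.c (n := n))) ∪ (E.image (GVert.d (n := n))))))
      have h2 := Finset.card_insert_le (GVert.a j) (insert (GVert.b i)
        ((E.image (GVert.c (n := n))) ∪ (E.image (GVert.d (n := n)))))
      have h3 := Finset.card_insert_le (GVert.b i)
        ((E.image (GVert.c (n := n))) ∪ (E.image (GVert.d (n := n))))
      have h4 := Finset.card_union_le (E.image (GVert.c (n := n))) (E.image (GVert.d (n := n)))
      have h5 := Finset.card_image_le (s := E) (f := GVert.c (n := n))
      have h6 := Finset.card_image_le (s := E) (f := GVert.d (n := n))
      rw [hS]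
      omega
    calc X.ncard ≤ (↑S : Set (GVert n)).ncard := Set.ncard_le_ncard hsub (Set.toFinite _)
      _ = S.card := Set.ncard_coe_finset S
      _ ≤ 2 * n := hcard
end

section
/- For every integer n ≥ 1, the IR(G_n)-sets are precisely the following 4n + 2 sets: X = C ∪ D ∪ {u}; X_i = (X − {c_i}) ∪ {a_i} for i = 1,...,n; X_i' = (X − {d_i}) ∪ {a_i} for i = 1,...,n; Y = C ∪ D ∪ {v}; Y_i = (Y − {c_i}) ∪ {b_i} for i = 1,...,n; and Y_i' = (Y − {d_i}) ∪ {b_i} for i = 1,...,n. -/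
open SimpleGraph

/-- `C ∪ D`. -/
def CDset (n : ℕ) : Set (GVert n) := {x | ∃ i, x = GVert.c i ∨ x = GVert.d i}

/-- `X = C ∪ D ∪ {u}`. -/
def Xbase (n : ℕ) : Set (GVert n) := CDset n ∪ {GVert.u}

/-- `Y = C ∪ D ∪ {v}`. -/
def Ybase (n : ℕ) : Set (GVert n) := CDset n ∪ {GVert.v}

/-- `Xᵢ = (X − {cᵢ}) ∪ {aᵢ}`. -/
def XiSet (n : ℕ) (i : Fin n) : Set (GVert n) := (Xbase n \ {GVert.c i}) ∪ {GVert.a i}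

/-- `Xᵢ' = (X − {dᵢ}) ∪ {aᵢ}`. -/
def XiSet' (n : ℕ) (i : Fin n) : Set (GVert n) := (Xbase n \ {GVert.d i}) ∪ {GVert.a i}

/-- `Yᵢ = (Y − {cᵢ}) ∪ {bᵢ}`. -/
def YiSet (n : ℕ) (i : Fin n) : Set (GVert n) := (Ybase n \ {GVert.c i}) ∪ {GVert.b i}

/-- `Yᵢ' = (Y − {dᵢ}) ∪ {bᵢ}`. -/
def YiSet' (n : ℕ) (i : Fin n) : Set (GVert n) := (Ybase n \ {GVert.d i}) ∪ {GVert.b i}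

namespace GnProof
open GVert
variable {n : ℕ}

lemma adj_c (x : GVert n) (i : Fin n) : (Gn n).Adj x (.c i) ↔ x = .a i ∨ x = .b i := by
  simp only [Gn, fromRel_adj]; aesop

lemma adj_d (x : GVert n) (i : Fin n) : (Gn n).Adj x (.d i) ↔ x = .a i ∨ x = .b i := by
  simp only [Gn, fromRel_adj]; aesop

lemma adj_u (x : GVert n) : (Gn n).Adj x .u ↔ x = .v ∨ ∃ i, x = .a i := by
  simp only [Gn, fromRel_adj]; aesop

lemma adj_v (x : GVert n) : (Gn n).Adj x .v ↔ x = .u ∨ ∃ i, x = .b i := by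
  simp only [Gn, fromRel_adj]; aesop

lemma adj_a (x : GVert n) (i : Fin n) :
    (Gn n).Adj x (.a i) ↔ x = .u ∨ x = .c i ∨ x = .d i ∨ ∃ j, j ≠ i ∧ x = .b j := by
  simp only [Gn, fromRel_adj]; aesop

lemma adj_b (x : GVert n) (i : Fin n) :
    (Gn n).Adj x (.b i) ↔ x = .v ∨ x = .c i ∨ x = .d i ∨ ∃ j, j ≠ i ∧ x = .a j := by
  simp only [Gn, fromRel_adj]; aesop

/-- `x` dominates `w`. -/
def dom (x w : GVert n) : Prop := w = x ∨ (Gn n).Adj x w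

lemma dom_c (x : GVert n) (i : Fin n) : dom x (.c i) ↔ x = .c i ∨ x = .a i ∨ x = .b i := by
  unfold dom; rw [adj_c]; aesop

lemma dom_d (x : GVert n) (i : Fin n) : dom x (.d i) ↔ x = .d i ∨ x = .a i ∨ x = .b i := by
  unfold dom; rw [adj_d]; aesop

lemma dom_u (x : GVert n) : dom x .u ↔ x = .u ∨ x = .v ∨ ∃ i, x = .a i := by
  unfold dom; rw [adj_u]; aesop

lemma dom_v (x : GVert n) : dom x .v ↔ x = .v ∨ x = .u ∨ ∃ i, x = .b i := by
  unfold dom; rw [adj_v]; aesop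

lemma dom_a (x : GVert n) (i : Fin n) :
    dom x (.a i) ↔ x = .a i ∨ x = .u ∨ x = .c i ∨ x = .d i ∨ ∃ j, j ≠ i ∧ x = .b j := by
  unfold dom; rw [adj_a]; aesop

lemma dom_b (x : GVert n) (i : Fin n) :
    dom x (.b i) ↔ x = .b i ∨ x = .v ∨ x = .c i ∨ x = .d i ∨ ∃ j, j ≠ i ∧ x = .a j := by
  unfold dom; rw [adj_b]; aesop

lemma isPrivateNbr_iff (D : Set (GVert n)) (x w : GVert n) :
    IsPrivateNbr (Gn n) D x w ↔ dom x w ∧ ∀ y ∈ D, y ≠ x → ¬ dom y w := Iff.rfl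

lemma dom_c_left (w : GVert n) (i : Fin n) : dom (.c i) w ↔ w = .c i ∨ w = .a i ∨ w = .b i := by
  unfold dom; rw [SimpleGraph.adj_comm, adj_c]

lemma dom_d_left (w : GVert n) (i : Fin n) : dom (.d i) w ↔ w = .d i ∨ w = .a i ∨ w = .b i := by
  unfold dom; rw [SimpleGraph.adj_comm, adj_d]

lemma dom_u_left (w : GVert n) : dom (.u) w ↔ w = .u ∨ w = .v ∨ ∃ i, w = .a i := by
  unfold dom; rw [SimpleGraph.adj_comm, adj_u]

@[simp] lemma mem_Xbase_u : (GVert.u ∈ Xbase n) := by simp [Xbase, CDset]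
@[simp] lemma mem_Xbase_v : (GVert.v ∈ Xbase n) ↔ False := by simp [Xbase, CDset]
@[simp] lemma mem_Xbase_a (j : Fin n) : (GVert.a j ∈ Xbase n) ↔ False := by simp [Xbase, CDset]
@[simp] lemma mem_Xbase_b (j : Fin n) : (GVert.b j ∈ Xbase n) ↔ False := by simp [Xbase, CDset]
@[simp] lemma mem_Xbase_c (j : Fin n) : (GVert.c j ∈ Xbase n) := by simp [Xbase, CDset]
@[simp] lemma mem_Xbase_d (j : Fin n) : (GVert.d j ∈ Xbase n) := by simp [Xbase, CDset]

@[simp] lemma mem_Ybase_u : (GVert.u ∈ Ybase n) ↔ False := by simp [Ybase, CDset]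
@[simp] lemma mem_Ybase_v : (GVert.v ∈ Ybase n) := by simp [Ybase, CDset]
@[simp] lemma mem_Ybase_a (j : Fin n) : (GVert.a j ∈ Ybase n) ↔ False := by simp [Ybase, CDset]
@[simp] lemma mem_Ybase_b (j : Fin n) : (GVert.b j ∈ Ybase n) ↔ False := by simp [Ybase, CDset]
@[simp] lemma mem_Ybase_c (j : Fin n) : (GVert.c j ∈ Ybase n) := by simp [Ybase, CDset]
@[simp] lemma mem_Ybase_d (j : Fin n) : (GVert.d j ∈ Ybase n) := by simp [Ybase, CDset]

@[simp] lemma mem_XiSet_u (i : Fin n) : (GVert.u ∈ XiSet n i) := by simp [XiSet]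
@[simp] lemma mem_XiSet_v (i : Fin n) : (GVert.v ∈ XiSet n i) ↔ False := by simp [XiSet]
@[simp] lemma mem_XiSet_a (i j : Fin n) : (GVert.a j ∈ XiSet n i) ↔ j = i := by simp [XiSet]
@[simp] lemma mem_XiSet_b (i j : Fin n) : (GVert.b j ∈ XiSet n i) ↔ False := by simp [XiSet]
@[simp] lemma mem_XiSet_c (i j : Fin n) : (GVert.c j ∈ XiSet n i) ↔ j ≠ i := by
  simp [XiSet]
@[simp] lemma mem_XiSet_d (i j : Fin n) : (GVert.d j ∈ XiSet n i) := by simp [XiSet]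

@[simp] lemma mem_XiSet'_u (i : Fin n) : (GVert.u ∈ XiSet' n i) := by simp [XiSet']
@[simp] lemma mem_XiSet'_v (i : Fin n) : (GVert.v ∈ XiSet' n i) ↔ False := by simp [XiSet']
@[simp] lemma mem_XiSet'_a (i j : Fin n) : (GVert.a j ∈ XiSet' n i) ↔ j = i := by simp [XiSet']
@[simp] lemma mem_XiSet'_b (i j : Fin n) : (GVert.b j ∈ XiSet' n i) ↔ False := by simp [XiSet']
@[simp] lemma mem_XiSet'_c (i j : Fin n) : (GVert.c j ∈ XiSet' n i) := by simp [XiSet']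
@[simp] lemma mem_XiSet'_d (i j : Fin n) : (GVert.d j ∈ XiSet' n i) ↔ j ≠ i := by
  simp [XiSet']

@[simp] lemma mem_YiSet_u (i : Fin n) : (GVert.u ∈ YiSet n i) ↔ False := by simp [YiSet]
@[simp] lemma mem_YiSet_v (i : Fin n) : (GVert.v ∈ YiSet n i) := by simp [YiSet]
@[simp] lemma mem_YiSet_a (i j : Fin n) : (GVert.a j ∈ YiSet n i) ↔ False := by simp [YiSet]
@[simp] lemma mem_YiSet_b (i j : Fin n) : (GVert.b j ∈ YiSet n i) ↔ j = i := by simp [YiSet]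
@[simp] lemma mem_YiSet_c (i j : Fin n) : (GVert.c j ∈ YiSet n i) ↔ j ≠ i := by
  simp [YiSet]
@[simp] lemma mem_YiSet_d (i j : Fin n) : (GVert.d j ∈ YiSet n i) := by simp [YiSet]

@[simp] lemma mem_YiSet'_u (i : Fin n) : (GVert.u ∈ YiSet' n i) ↔ False := by simp [YiSet']
@[simp] lemma mem_YiSet'_v (i : Fin n) : (GVert.v ∈ YiSet' n i) := by simp [YiSet']
@[simp] lemma mem_YiSet'_a (i j : Fin n) : (GVert.a j ∈ YiSet' n i) ↔ False := by simp [YiSet']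
@[simp] lemma mem_YiSet'_b (i j : Fin n) : (GVert.b j ∈ YiSet' n i) ↔ j = i := by simp [YiSet']
@[simp] lemma mem_YiSet'_c (i j : Fin n) : (GVert.c j ∈ YiSet' n i) := by simp [YiSet']
@[simp] lemma mem_YiSet'_d (i j : Fin n) : (GVert.d j ∈ YiSet' n i) ↔ j ≠ i := by
  simp [YiSet']
/-- The swap automorphism `u ↔ v`, `aᵢ ↔ bᵢ`. -/
def sw : GVert n → GVert n
  | .u => .v
  | .v => .u
  | .a i => .b i
  | .b i => .a i
  | .c i => .c i
  | .d i => .d i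

@[simp] lemma sw_u : sw (GVert.u : GVert n) = .v := rfl
@[simp] lemma sw_v : sw (GVert.v : GVert n) = .u := rfl
@[simp] lemma sw_a (i : Fin n) : sw (GVert.a i) = .b i := rfl
@[simp] lemma sw_b (i : Fin n) : sw (GVert.b i) = .a i := rfl
@[simp] lemma sw_c (i : Fin n) : sw (GVert.c i) = .c i := rfl
@[simp] lemma sw_d (i : Fin n) : sw (GVert.d i) = .d i := rfl

@[simp] lemma sw_sw (x : GVert n) : sw (sw x) = x := by cases x <;> rfl

lemma sw_inj : Function.Injective (sw : GVert n → GVert n) :=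
  Function.LeftInverse.injective sw_sw

lemma sw_adj (x y : GVert n) (h : (Gn n).Adj x y) : (Gn n).Adj (sw x) (sw y) := by
  rw [Gn, fromRel_adj] at h ⊢
  obtain ⟨hne, h⟩ := h
  refine ⟨fun he => hne (sw_inj he), ?_⟩
  rcases h with (⟨rfl,rfl⟩|⟨i,rfl,rfl⟩|⟨i,rfl,rfl⟩|⟨i,j,hij,rfl,rfl⟩|⟨i,rfl,rfl⟩|⟨i,rfl,rfl⟩|⟨i,rfl,rfl⟩|⟨i,rfl,rfl⟩) |
    (⟨rfl,rfl⟩|⟨i,rfl,rfl⟩|⟨i,rfl,rfl⟩|⟨i,j,hij,rfl,rfl⟩|⟨i,rfl,rfl⟩|⟨i,rfl,rfl⟩|⟨i,rfl,rfl⟩|⟨i,rfl,rfl⟩) <;>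
    simp only [sw] <;> aesop

lemma sw_adj_iff (x y : GVert n) : (Gn n).Adj (sw x) (sw y) ↔ (Gn n).Adj x y := by
  constructor
  · intro h; have := sw_adj _ _ h; simpa using this
  · exact sw_adj x y

lemma sw_dom (x w : GVert n) : dom (sw x) (sw w) ↔ dom x w := by
  unfold dom; rw [sw_adj_iff, sw_inj.eq_iff]

@[simp] lemma mem_sw_image (S : Set (GVert n)) (x : GVert n) : x ∈ sw '' S ↔ sw x ∈ S := by
  constructor
  · rintro ⟨y, hy, rfl⟩; simpa using hy
  · intro h; exact ⟨sw x, h, by simp⟩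

lemma sw_irred {D : Set (GVert n)} (hD : Irredundant (Gn n) D) :
    Irredundant (Gn n) (sw '' D) := by
  rintro x hx
  rw [mem_sw_image] at hx
  obtain ⟨w, hw1, hw2⟩ := hD (sw x) hx
  have hw1' : dom (sw x) w := hw1
  refine ⟨sw w, ?_, ?_⟩
  · show dom x (sw w)
    have : dom (sw (sw x)) (sw w) := (sw_dom (sw x) w).mpr hw1'
    simpa using this
  · intro y hy hyx hdom
    rw [mem_sw_image] at hy
    have hdom' : dom y (sw w) := hdom
    have h2 : dom (sw y) w := by
      have := (sw_dom y (sw w)).mpr hdom'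
      simpa using this
    exact hw2 (sw y) hy (fun h => hyx (by simpa using congrArg sw h)) h2

lemma sw_ncard (D : Set (GVert n)) : (sw '' D).ncard = D.ncard :=
  Set.ncard_image_of_injective D sw_inj

lemma sw_Xbase : sw '' (Xbase n) = Ybase n := by
  ext x; rw [mem_sw_image]; cases x <;> simp [sw]

lemma sw_Ybase : sw '' (Ybase n) = Xbase n := by
  ext x; rw [mem_sw_image]; cases x <;> simp [sw]

lemma sw_XiSet (i : Fin n) : sw '' (XiSet n i) = YiSet n i := by
  ext x; rw [mem_sw_image]; cases x <;> simp [sw]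

lemma sw_XiSet' (i : Fin n) : sw '' (XiSet' n i) = YiSet' n i := by
  ext x; rw [mem_sw_image]; cases x <;> simp [sw]

lemma sw_YiSet (i : Fin n) : sw '' (YiSet n i) = XiSet n i := by
  ext x; rw [mem_sw_image]; cases x <;> simp [sw]

lemma sw_YiSet' (i : Fin n) : sw '' (YiSet' n i) = XiSet' n i := by
  ext x; rw [mem_sw_image]; cases x <;> simp [sw]
/-- Enumerating equivalence for `GVert n`. -/
def gEquiv : GVert n ≃ (Fin n × Fin 4) ⊕ Fin 2 where
  toFun x := match x with
    | .u => .inr 0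
    | .v => .inr 1
    | .a i => .inl (i, 0)
    | .b i => .inl (i, 1)
    | .c i => .inl (i, 2)
    | .d i => .inl (i, 3)
  invFun x := match x with
    | .inl (i, j) => ![GVert.a i, GVert.b i, GVert.c i, GVert.d i] j
    | .inr j => ![GVert.u, GVert.v] j
  left_inv x := by cases x <;> rfl
  right_inv x := by rcases x with ⟨i, j⟩ | j <;> fin_cases j <;> rfl

lemma sum_gvert (g : GVert n → ℕ) :
    ∑ x, g x = (∑ i, (g (.a i) + g (.b i) + g (.c i) + g (.d i))) + (g .u + g .v) := by
  rw [← Equiv.sum_comp gEquiv.symm g, Fintype.sum_sum_type, Fintype.sum_prod_type]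
  simp [Fin.sum_univ_four, Fin.sum_univ_two, gEquiv, add_assoc]

open scoped Classical in
lemma ncard_eq_sum (D : Set (GVert n)) : D.ncard = ∑ x, if x ∈ D then 1 else 0 := by
  rw [← Nat.card_coe_set_eq, Nat.card_eq_fintype_card, Fintype.card_subtype,
    Finset.card_filter]

open scoped Classical in
/-- Number of elements of `D` among `{u, v}`. -/
noncomputable def fib0 (D : Set (GVert n)) : ℕ :=
  (if GVert.u ∈ D then 1 else 0) + (if GVert.v ∈ D then 1 else 0)

open scoped Classical in
/-- Number of elements of `D` in block `Sᵢ`. -/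
noncomputable def fib (D : Set (GVert n)) (i : Fin n) : ℕ :=
  (if GVert.a i ∈ D then 1 else 0) + (if GVert.b i ∈ D then 1 else 0) +
  (if GVert.c i ∈ D then 1 else 0) + (if GVert.d i ∈ D then 1 else 0)

lemma ncard_decomp (D : Set (GVert n)) : D.ncard = (∑ i, fib D i) + fib0 D := by
  classical
  rw [ncard_eq_sum, sum_gvert (fun x => if x ∈ D then 1 else 0)]
  simp only [fib, fib0]
section PNlemmas
variable {D : Set (GVert n)}

lemma no_abc (hD : Irredundant (Gn n) D) (i : Fin n)
    (ha : .a i ∈ D) (hb : .b i ∈ D) (hc : .c i ∈ D) : False := by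
  obtain ⟨w, hw1, hw2⟩ := hD _ hc
  have hw1' : dom (.c i) w := hw1
  rw [dom_c_left] at hw1'
  rcases hw1' with rfl | rfl | rfl
  · exact hw2 _ ha (by simp) (show dom (.a i) (.c i) by simp [dom_c])
  · exact hw2 _ ha (by simp) (Or.inl rfl)
  · exact hw2 _ hb (by simp) (Or.inl rfl)

lemma no_abd (hD : Irredundant (Gn n) D) (i : Fin n)
    (ha : .a i ∈ D) (hb : .b i ∈ D) (hd : .d i ∈ D) : False := by
  obtain ⟨w, hw1, hw2⟩ := hD _ hd
  have hw1' : dom (.d i) w := hw1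
  rw [dom_d_left] at hw1'
  rcases hw1' with rfl | rfl | rfl
  · exact hw2 _ ha (by simp) (show dom (.a i) (.d i) by simp [dom_d])
  · exact hw2 _ ha (by simp) (Or.inl rfl)
  · exact hw2 _ hb (by simp) (Or.inl rfl)

lemma no_acd (hD : Irredundant (Gn n) D) (i : Fin n)
    (ha : .a i ∈ D) (hc : .c i ∈ D) (hd : .d i ∈ D) : False := by
  obtain ⟨w, hw1, hw2⟩ := hD _ hc
  have hw1' : dom (.c i) w := hw1
  rw [dom_c_left] at hw1'
  rcases hw1' with rfl | rfl | rfl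
  · exact hw2 _ ha (by simp) (show dom (.a i) (.c i) by simp [dom_c])
  · exact hw2 _ ha (by simp) (Or.inl rfl)
  · exact hw2 _ hd (by simp) (show dom (.d i) (.b i) by simp [dom_b])

lemma no_bcd (hD : Irredundant (Gn n) D) (i : Fin n)
    (hb : .b i ∈ D) (hc : .c i ∈ D) (hd : .d i ∈ D) : False := by
  obtain ⟨w, hw1, hw2⟩ := hD _ hc
  have hw1' : dom (.c i) w := hw1
  rw [dom_c_left] at hw1'
  rcases hw1' with rfl | rfl | rfl
  · exact hw2 _ hb (by simp) (show dom (.b i) (.c i) by simp [dom_c])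
  · exact hw2 _ hd (by simp) (show dom (.d i) (.a i) by simp [dom_a])
  · exact hw2 _ hb (by simp) (Or.inl rfl)

lemma fib_le_two (hD : Irredundant (Gn n) D) (i : Fin n) : fib D i ≤ 2 := by
  classical
  by_cases ha : GVert.a i ∈ D <;> by_cases hb : GVert.b i ∈ D <;>
    by_cases hc : GVert.c i ∈ D <;> by_cases hd : GVert.d i ∈ D <;>
    first
      | exact (no_abc hD i ha hb hc).elim
      | exact (no_abd hD i ha hb hd).elim
      | exact (no_acd hD i ha hc hd).elim
      | exact (no_bcd hD i hb hc hd).elim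
      | simp [fib, ha, hb, hc, hd]

lemma fib0_le_two (D : Set (GVert n)) : fib0 D ≤ 2 := by
  classical
  unfold fib0; split_ifs <;> omega

lemma u_pn (hD : Irredundant (Gn n) D) (hu : .u ∈ D) :
    (GVert.v ∉ D ∧ ∀ j, GVert.a j ∉ D) ∨ (GVert.v ∉ D ∧ ∀ j, GVert.b j ∉ D) ∨
    (∃ i, GVert.a i ∉ D ∧ GVert.c i ∉ D ∧ GVert.d i ∉ D) := by
  obtain ⟨w, hw1, hw2⟩ := hD _ hu
  have hw1' : dom .u w := hw1
  rw [dom_u_left] at hw1'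
  rcases hw1' with rfl | rfl | ⟨i, rfl⟩
  · refine Or.inl ⟨fun hv => hw2 _ hv (by simp) (show dom .v .u by simp [dom_u]),
      fun j hj => hw2 _ hj (by simp) (show dom (.a j) .u by simp [dom_u])⟩
  · refine Or.inr (Or.inl ⟨fun hv => hw2 _ hv (by simp) (Or.inl rfl),
      fun j hj => hw2 _ hj (by simp) (show dom (.b j) .v by simp [dom_v])⟩)
  · exact Or.inr (Or.inr ⟨i, fun h => hw2 _ h (by simp) (Or.inl rfl),
      fun h => hw2 _ h (by simp) (show dom (.c i) (.a i) by simp [dom_a]),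
      fun h => hw2 _ h (by simp) (show dom (.d i) (.a i) by simp [dom_a])⟩)

lemma v_pn (hD : Irredundant (Gn n) D) (hv : .v ∈ D) :
    (GVert.u ∉ D ∧ ∀ j, GVert.b j ∉ D) ∨ (GVert.u ∉ D ∧ ∀ j, GVert.a j ∉ D) ∨
    (∃ i, GVert.b i ∉ D ∧ GVert.c i ∉ D ∧ GVert.d i ∉ D) := by
  have h := u_pn (sw_irred hD) (by rw [mem_sw_image]; exact hv)
  simpa only [mem_sw_image, sw_u, sw_v, sw_a, sw_b, sw_c, sw_d] using h

lemma noa2_c (hD : Irredundant (Gn n) D) {i j : Fin n}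
    (ha : .a i ∈ D) (hc : .c i ∈ D) (hj : j ≠ i) (haj : .a j ∈ D) : False := by
  obtain ⟨w, hw1, hw2⟩ := hD _ hc
  have hw1' : dom (.c i) w := hw1
  rw [dom_c_left] at hw1'
  rcases hw1' with rfl | rfl | rfl
  · exact hw2 _ ha (by simp) (show dom (.a i) (.c i) by simp [dom_c])
  · exact hw2 _ ha (by simp) (Or.inl rfl)
  · exact hw2 _ haj (by simp) (show dom (.a j) (.b i) by rw [dom_b]; tauto)

lemma noa2_d (hD : Irredundant (Gn n) D) {i j : Fin n}
    (ha : .a i ∈ D) (hd : .d i ∈ D) (hj : j ≠ i) (haj : .a j ∈ D) : False := by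
  obtain ⟨w, hw1, hw2⟩ := hD _ hd
  have hw1' : dom (.d i) w := hw1
  rw [dom_d_left] at hw1'
  rcases hw1' with rfl | rfl | rfl
  · exact hw2 _ ha (by simp) (show dom (.a i) (.d i) by simp [dom_d])
  · exact hw2 _ ha (by simp) (Or.inl rfl)
  · exact hw2 _ haj (by simp) (show dom (.a j) (.b i) by rw [dom_b]; tauto)

lemma nob_c (hD : Irredundant (Gn n) D) {j : Fin n}
    (hu : .u ∈ D) (hb : .b j ∈ D) (hc : .c j ∈ D) : False := by
  obtain ⟨w, hw1, hw2⟩ := hD _ hc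
  have hw1' : dom (.c j) w := hw1
  rw [dom_c_left] at hw1'
  rcases hw1' with rfl | rfl | rfl
  · exact hw2 _ hb (by simp) (show dom (.b j) (.c j) by simp [dom_c])
  · exact hw2 _ hu (by simp) (show dom .u (.a j) by simp [dom_a])
  · exact hw2 _ hb (by simp) (Or.inl rfl)

lemma nob_d (hD : Irredundant (Gn n) D) {j : Fin n}
    (hu : .u ∈ D) (hb : .b j ∈ D) (hd : .d j ∈ D) : False := by
  obtain ⟨w, hw1, hw2⟩ := hD _ hd
  have hw1' : dom (.d j) w := hw1
  rw [dom_d_left] at hw1'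
  rcases hw1' with rfl | rfl | rfl
  · exact hw2 _ hb (by simp) (show dom (.b j) (.d j) by simp [dom_d])
  · exact hw2 _ hu (by simp) (show dom .u (.a j) by simp [dom_a])
  · exact hw2 _ hb (by simp) (Or.inl rfl)

end PNlemmas
section Irred6

lemma irred_Xbase : Irredundant (Gn n) (Xbase n) := by
  intro x hx
  cases x with
  | u =>
    refine ⟨.v, show dom .u .v by simp [dom_v], ?_⟩
    intro y hy hne hdom
    have hdom' : dom y .v := hdom
    rw [dom_v] at hdom'
    rcases hdom' with rfl | rfl | ⟨j, rfl⟩ <;> simp_all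
  | v => simp at hx
  | a j => simp at hx
  | b j => simp at hx
  | c j =>
    refine ⟨.c j, Or.inl rfl, ?_⟩
    intro y hy hne hdom
    have hdom' : dom y (.c j) := hdom
    rw [dom_c] at hdom'
    rcases hdom' with rfl | rfl | rfl <;> simp_all
  | d j =>
    refine ⟨.d j, Or.inl rfl, ?_⟩
    intro y hy hne hdom
    have hdom' : dom y (.d j) := hdom
    rw [dom_d] at hdom'
    rcases hdom' with rfl | rfl | rfl <;> simp_all

lemma irred_XiSet (i : Fin n) : Irredundant (Gn n) (XiSet n i) := by
  intro x hx
  cases x with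
  | u =>
    refine ⟨.v, show dom .u .v by simp [dom_v], ?_⟩
    intro y hy hne hdom
    have hdom' : dom y .v := hdom
    rw [dom_v] at hdom'
    rcases hdom' with rfl | rfl | ⟨j, rfl⟩ <;> simp_all
  | v => simp at hx
  | a j =>
    rw [mem_XiSet_a] at hx; subst hx
    refine ⟨.c j, show dom (.a j) (.c j) by simp [dom_c], ?_⟩
    intro y hy hne hdom
    have hdom' : dom y (.c j) := hdom
    rw [dom_c] at hdom'
    rcases hdom' with rfl | rfl | rfl <;> simp_all
  | b j => simp at hx
  | c j =>
    rw [mem_XiSet_c] at hx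
    refine ⟨.c j, Or.inl rfl, ?_⟩
    intro y hy hne hdom
    have hdom' : dom y (.c j) := hdom
    rw [dom_c] at hdom'
    rcases hdom' with rfl | rfl | rfl <;> simp_all
  | d j =>
    by_cases hji : j = i
    · subst hji
      refine ⟨.b j, show dom (.d j) (.b j) by simp [dom_b], ?_⟩
      intro y hy hne hdom
      have hdom' : dom y (.b j) := hdom
      rw [dom_b] at hdom'
      rcases hdom' with rfl | rfl | rfl | rfl | ⟨k, hk, rfl⟩ <;> simp_all
    · refine ⟨.d j, Or.inl rfl, ?_⟩
      intro y hy hne hdom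
      have hdom' : dom y (.d j) := hdom
      rw [dom_d] at hdom'
      rcases hdom' with rfl | rfl | rfl <;> simp_all

lemma irred_XiSet' (i : Fin n) : Irredundant (Gn n) (XiSet' n i) := by
  intro x hx
  cases x with
  | u =>
    refine ⟨.v, show dom .u .v by simp [dom_v], ?_⟩
    intro y hy hne hdom
    have hdom' : dom y .v := hdom
    rw [dom_v] at hdom'
    rcases hdom' with rfl | rfl | ⟨j, rfl⟩ <;> simp_all
  | v => simp at hx
  | a j =>
    rw [mem_XiSet'_a] at hx; subst hx
    refine ⟨.d j, show dom (.a j) (.d j) by simp [dom_d], ?_⟩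
    intro y hy hne hdom
    have hdom' : dom y (.d j) := hdom
    rw [dom_d] at hdom'
    rcases hdom' with rfl | rfl | rfl <;> simp_all
  | b j => simp at hx
  | c j =>
    by_cases hji : j = i
    · subst hji
      refine ⟨.b j, show dom (.c j) (.b j) by simp [dom_b], ?_⟩
      intro y hy hne hdom
      have hdom' : dom y (.b j) := hdom
      rw [dom_b] at hdom'
      rcases hdom' with rfl | rfl | rfl | rfl | ⟨k, hk, rfl⟩ <;> simp_all
    · refine ⟨.c j, Or.inl rfl, ?_⟩
      intro y hy hne hdom
      have hdom' : dom y (.c j) := hdom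
      rw [dom_c] at hdom'
      rcases hdom' with rfl | rfl | rfl <;> simp_all
  | d j =>
    rw [mem_XiSet'_d] at hx
    refine ⟨.d j, Or.inl rfl, ?_⟩
    intro y hy hne hdom
    have hdom' : dom y (.d j) := hdom
    rw [dom_d] at hdom'
    rcases hdom' with rfl | rfl | rfl <;> simp_all

lemma irred_Ybase : Irredundant (Gn n) (Ybase n) := by
  rw [← sw_Xbase]; exact sw_irred irred_Xbase

lemma irred_YiSet (i : Fin n) : Irredundant (Gn n) (YiSet n i) := by
  rw [← sw_XiSet]; exact sw_irred (irred_XiSet i)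

lemma irred_YiSet' (i : Fin n) : Irredundant (Gn n) (YiSet' n i) := by
  rw [← sw_XiSet']; exact sw_irred (irred_XiSet' i)

lemma card_of_fib {D : Set (GVert n)} (h1 : ∀ i, fib D i = 2) (h2 : fib0 D = 1) :
    D.ncard = 2 * n + 1 := by
  rw [ncard_decomp, h2, Finset.sum_congr rfl (fun i _ => h1 i)]
  simp [Finset.sum_const, Finset.card_univ, mul_comm]

lemma ncard_Xbase : (Xbase n).ncard = 2 * n + 1 :=
  card_of_fib (fun i => by simp [fib]) (by simp [fib0])

lemma ncard_XiSet (i : Fin n) : (XiSet n i).ncard = 2 * n + 1 :=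
  card_of_fib (fun j => by by_cases hj : j = i <;> simp [fib, hj]) (by simp [fib0])

lemma ncard_XiSet' (i : Fin n) : (XiSet' n i).ncard = 2 * n + 1 :=
  card_of_fib (fun j => by by_cases hj : j = i <;> simp [fib, hj]) (by simp [fib0])

lemma ncard_Ybase : (Ybase n).ncard = 2 * n + 1 := by
  rw [← sw_Xbase, sw_ncard]; exact ncard_Xbase

lemma ncard_YiSet (i : Fin n) : (YiSet n i).ncard = 2 * n + 1 := by
  rw [← sw_XiSet, sw_ncard]; exact ncard_XiSet i

lemma ncard_YiSet' (i : Fin n) : (YiSet' n i).ncard = 2 * n + 1 := by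
  rw [← sw_XiSet', sw_ncard]; exact ncard_XiSet' i

end Irred6

section Bounds

lemma sum_fib_le {f : Fin n → ℕ} (h2 : ∀ j, f j ≤ 2) : ∑ j, f j ≤ 2 * n := by
  calc ∑ j, f j ≤ (Finset.univ : Finset (Fin n)).card • 2 :=
        Finset.sum_le_card_nsmul _ _ 2 (fun x _ => h2 x)
    _ = 2 * n := by simp [mul_comm]

lemma sum_bound1 {f : Fin n → ℕ} (h2 : ∀ j, f j ≤ 2) {i : Fin n} {m : ℕ} (hi : f i ≤ m) :
    ∑ j, f j ≤ m + 2 * (n - 1) := by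
  rw [← Finset.add_sum_erase _ f (Finset.mem_univ i)]
  have h : ∑ j ∈ Finset.univ.erase i, f j ≤ (Finset.univ.erase i).card • 2 :=
    Finset.sum_le_card_nsmul _ _ 2 (fun x _ => h2 x)
  rw [Finset.card_erase_of_mem (Finset.mem_univ i)] at h
  simp only [Finset.card_univ, Fintype.card_fin, smul_eq_mul] at h
  omega

lemma sum_bound2 {f : Fin n → ℕ} (h2 : ∀ j, f j ≤ 2) {i k : Fin n} (hik : i ≠ k)
    {m1 m2 : ℕ} (hi : f i ≤ m1) (hk : f k ≤ m2) :
    ∑ j, f j ≤ m1 + m2 + 2 * (n - 2) := by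
  rw [← Finset.add_sum_erase _ f (Finset.mem_univ i),
    ← Finset.add_sum_erase _ f (Finset.mem_erase.mpr ⟨Ne.symm hik, Finset.mem_univ k⟩)]
  have h : ∑ j ∈ (Finset.univ.erase i).erase k, f j ≤ ((Finset.univ.erase i).erase k).card • 2 :=
    Finset.sum_le_card_nsmul _ _ 2 (fun x _ => h2 x)
  rw [Finset.card_erase_of_mem (Finset.mem_erase.mpr ⟨Ne.symm hik, Finset.mem_univ k⟩),
    Finset.card_erase_of_mem (Finset.mem_univ i)] at h
  simp only [Finset.card_univ, Fintype.card_fin, smul_eq_mul] at h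
  omega

lemma sum_eq_all_two {f : Fin n → ℕ} (h2 : ∀ j, f j ≤ 2) (hs : ∑ j, f j = 2 * n) (i : Fin n) :
    f i = 2 := by
  have h1 := sum_bound1 h2 (le_refl (f i))
  have hp : 0 < n := i.pos
  have := h2 i
  omega

lemma irred_card_le {D : Set (GVert n)} (hD : Irredundant (Gn n) D) :
    D.ncard ≤ 2 * n + 1 := by
  classical
  rw [ncard_decomp]
  have hf := fib_le_two hD
  by_cases hu : GVert.u ∈ D
  · by_cases hv : GVert.v ∈ D
    · -- both: two deficient fibers
      rcases u_pn hD hu with ⟨hv', _⟩ | ⟨hv', _⟩ | ⟨i, hai, hci, hdi⟩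
      · exact absurd hv hv'
      · exact absurd hv hv'
      rcases v_pn hD hv with ⟨hu', _⟩ | ⟨hu', _⟩ | ⟨k, hbk, hck, hdk⟩
      · exact absurd hu hu'
      · exact absurd hu hu'
      have h0 : fib0 D ≤ 2 := fib0_le_two D
      by_cases hik : i = k
      · subst hik
        have hzero : fib D i = 0 := by simp [fib, hai, hbk, hci, hdi]
        have := sum_bound1 hf (le_of_eq hzero)
        have := i.pos
        omega
      · have hfi : fib D i ≤ 1 := by
          simp only [fib, if_neg hai, if_neg hci, if_neg hdi]
          split_ifs <;> omega
        have hfk : fib D k ≤ 1 := by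
          simp only [fib, if_neg hbk, if_neg hck, if_neg hdk]
          split_ifs <;> omega
        have h2n : 2 ≤ n := by
          by_contra h
          push_neg at h
          have hi' := i.isLt
          have hk' := k.isLt
          exact hik (Fin.ext (by omega))
        have := sum_bound2 hf hik hfi hfk
        omega
    · have h0 : fib0 D ≤ 1 := by simp [fib0, hu, hv]
      have := sum_fib_le hf
      omega
  · have h0 : fib0 D ≤ 1 := by
      simp only [fib0, if_neg hu]
      split_ifs <;> omega
    have := sum_fib_le hf
    omega

lemma IRnum_eq : IRnum (Gn n) = 2 * n + 1 := by
  have hmem : 2 * n + 1 ∈ {k | ∃ D : Set (GVert n), Irredundant (Gn n) D ∧ D.ncard = k} :=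
    ⟨Xbase n, irred_Xbase, ncard_Xbase⟩
  have hub : ∀ k ∈ {k | ∃ D : Set (GVert n), Irredundant (Gn n) D ∧ D.ncard = k},
      k ≤ 2 * n + 1 := by
    rintro k ⟨D, hD, rfl⟩
    exact irred_card_le hD
  exact le_antisymm (csSup_le ⟨_, hmem⟩ hub) (le_csSup ⟨2 * n + 1, hub⟩ hmem)

lemma isIRSet_iff (Z : Set (GVert n)) :
    IsIRSet (Gn n) Z ↔ Irredundant (Gn n) Z ∧ Z.ncard = 2 * n + 1 := by
  rw [IsIRSet, IRnum_eq]

end Bounds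
section Classify
variable {D : Set (GVert n)}

lemma sw_sw_image (S : Set (GVert n)) : sw '' (sw '' S) = S := by
  ext x; simp

lemma to_Xbase (hu : GVert.u ∈ D) (hv : GVert.v ∉ D) (hfib : ∀ j, fib D j = 2)
    (hna : ∀ j, GVert.a j ∉ D) (hnb : ∀ j, GVert.b j ∉ D) : D = Xbase n := by
  classical
  have hc : ∀ j, GVert.c j ∈ D := by
    intro j
    by_contra hcj
    have h := hfib j
    simp only [fib, if_neg (hna j), if_neg (hnb j), if_neg hcj] at h
    split_ifs at h <;> omega
  have hd : ∀ j, GVert.d j ∈ D := by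
    intro j
    by_contra hdj
    have h := hfib j
    simp only [fib, if_neg (hna j), if_neg (hnb j), if_neg hdj] at h
    split_ifs at h <;> omega
  ext x
  cases x with
  | u => simp [hu]
  | v => simp [hv]
  | a j => simp [hna j]
  | b j => simp [hnb j]
  | c j => simp [hc j]
  | d j => simp [hd j]

lemma classify_u (hD : Irredundant (Gn n) D) (hcard : D.ncard = 2 * n + 1)
    (hu : GVert.u ∈ D) (hv : GVert.v ∉ D) :
    D = Xbase n ∨ ∃ i, D = XiSet n i ∨ D = XiSet' n i := by
  classical
  have h0 : fib0 D = 1 := by simp [fib0, hu, hv]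
  have hsum : ∑ j, fib D j = 2 * n := by
    have := ncard_decomp D
    omega
  have hfib : ∀ j, fib D j = 2 := sum_eq_all_two (fib_le_two hD) hsum
  rcases u_pn hD hu with ⟨_, hna⟩ | ⟨_, hnb⟩ | ⟨i, hai, hci, hdi⟩
  · -- no a's; derive no b's
    have hnb : ∀ j, GVert.b j ∉ D := by
      intro j hbj
      by_cases hcj : GVert.c j ∈ D
      · exact nob_c hD hu hbj hcj
      by_cases hdj : GVert.d j ∈ D
      · exact nob_d hD hu hbj hdj
      have h := hfib j
      simp only [fib, if_neg (hna j), if_pos hbj, if_neg hcj, if_neg hdj] at h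
      omega
    exact Or.inl (to_Xbase hu hv hfib hna hnb)
  · -- no b's
    by_cases hA : ∃ i, GVert.a i ∈ D
    · obtain ⟨i, hai⟩ := hA
      refine Or.inr ⟨i, ?_⟩
      have hnaj : ∀ j, j ≠ i → GVert.a j ∉ D := by
        intro j hj haj
        by_cases hci : GVert.c i ∈ D
        · exact noa2_c hD hai hci hj haj
        by_cases hdi : GVert.d i ∈ D
        · exact noa2_d hD hai hdi hj haj
        have h := hfib i
        simp only [fib, if_pos hai, if_neg (hnb i), if_neg hci, if_neg hdi] at h
        omega
      have hcj : ∀ j, j ≠ i → GVert.c j ∈ D := by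
        intro j hj
        by_contra hcjn
        have h := hfib j
        simp only [fib, if_neg (hnaj j hj), if_neg (hnb j), if_neg hcjn] at h
        split_ifs at h <;> omega
      have hdj : ∀ j, j ≠ i → GVert.d j ∈ D := by
        intro j hj
        by_contra hdjn
        have h := hfib j
        simp only [fib, if_neg (hnaj j hj), if_neg (hnb j), if_neg hdjn] at h
        split_ifs at h <;> omega
      by_cases hci : GVert.c i ∈ D
      · -- D = XiSet' n i
        have hdi : GVert.d i ∉ D := by
          intro hd
          have h := hfib i
          simp only [fib, if_pos hai, if_neg (hnb i), if_pos hci, if_pos hd] at h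
          omega
        refine Or.inr ?_
        ext x
        cases x with
        | u => simp [hu]
        | v => simp [hv]
        | a j =>
          by_cases hj : j = i
          · subst hj; simp [hai]
          · simp [hj, hnaj j hj]
        | b j => simp [hnb j]
        | c j =>
          by_cases hj : j = i
          · subst hj; simp [hci]
          · simp [hcj j hj]
        | d j =>
          by_cases hj : j = i
          · subst hj; simp [hdi]
          · simp [hj, hdj j hj]
      · have hdi : GVert.d i ∈ D := by
          by_contra hd
          have h := hfib i
          simp only [fib, if_pos hai, if_neg (hnb i), if_neg hci, if_neg hd] at h
          omega
        refine Or.inl ?_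
        ext x
        cases x with
        | u => simp [hu]
        | v => simp [hv]
        | a j =>
          by_cases hj : j = i
          · subst hj; simp [hai]
          · simp [hj, hnaj j hj]
        | b j => simp [hnb j]
        | c j =>
          by_cases hj : j = i
          · subst hj; simp [hci]
          · simp [hj, hcj j hj]
        | d j =>
          by_cases hj : j = i
          · subst hj; simp [hdi]
          · simp [hdj j hj]
    · push_neg at hA
      exact Or.inl (to_Xbase hu hv hfib hA hnb)
  · have h := hfib i
    simp only [fib, if_neg hai, if_neg hci, if_neg hdi] at h
    split_ifs at h <;> omega

lemma card_le_of_uv (hD : Irredundant (Gn n) D) (hu : GVert.u ∈ D) (hv : GVert.v ∈ D) :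
    D.ncard ≤ 2 * n := by
  classical
  rw [ncard_decomp]
  have hf := fib_le_two hD
  have h0 : fib0 D ≤ 2 := fib0_le_two D
  rcases u_pn hD hu with ⟨hv', _⟩ | ⟨hv', _⟩ | ⟨i, hai, hci, hdi⟩
  · exact absurd hv hv'
  · exact absurd hv hv'
  rcases v_pn hD hv with ⟨hu', _⟩ | ⟨hu', _⟩ | ⟨k, hbk, hck, hdk⟩
  · exact absurd hu hu'
  · exact absurd hu hu'
  by_cases hik : i = k
  · subst hik
    have hzero : fib D i = 0 := by simp [fib, hai, hbk, hci, hdi]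
    have := sum_bound1 hf (le_of_eq hzero)
    have := i.pos
    omega
  · have hfi : fib D i ≤ 1 := by
      simp only [fib, if_neg hai, if_neg hci, if_neg hdi]
      split_ifs <;> omega
    have hfk : fib D k ≤ 1 := by
      simp only [fib, if_neg hbk, if_neg hck, if_neg hdk]
      split_ifs <;> omega
    have h2n : 2 ≤ n := by
      by_contra h
      push_neg at h
      have hi' := i.isLt
      have hk' := k.isLt
      exact hik (Fin.ext (by omega))
    have := sum_bound2 hf hik hfi hfk
    omega

lemma classify (hD : Irredundant (Gn n) D) (hcard : D.ncard = 2 * n + 1) :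
    D = Xbase n ∨ D = Ybase n ∨
      ∃ i, D = XiSet n i ∨ D = XiSet' n i ∨ D = YiSet n i ∨ D = YiSet' n i := by
  classical
  have honeuv : GVert.u ∈ D ∨ GVert.v ∈ D := by
    by_contra h
    push_neg at h
    have h0 : fib0 D = 0 := by simp [fib0, h.1, h.2]
    have := ncard_decomp D
    have := sum_fib_le (fib_le_two hD)
    omega
  by_cases hu : GVert.u ∈ D
  · have hv : GVert.v ∉ D := by
      intro hv
      have := card_le_of_uv hD hu hv
      omega
    rcases classify_u hD hcard hu hv with h | ⟨i, h | h⟩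
    · exact Or.inl h
    · exact Or.inr (Or.inr ⟨i, Or.inl h⟩)
    · exact Or.inr (Or.inr ⟨i, Or.inr (Or.inl h)⟩)
  · have hv : GVert.v ∈ D := honeuv.resolve_left hu
    have hu' : GVert.u ∈ sw '' D := by rw [mem_sw_image]; simpa using hv
    have hv' : GVert.v ∉ sw '' D := by rw [mem_sw_image]; simpa using hu
    have hcard' : (sw '' D).ncard = 2 * n + 1 := by rw [sw_ncard]; exact hcard
    rcases classify_u (sw_irred hD) hcard' hu' hv' with h | ⟨i, h | h⟩
    · refine Or.inr (Or.inl ?_)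
      have := congrArg (fun S => sw '' S) h
      simpa [sw_sw_image, sw_Xbase] using this
    · refine Or.inr (Or.inr ⟨i, Or.inr (Or.inr (Or.inl ?_))⟩)
      have := congrArg (fun S => sw '' S) h
      simpa [sw_sw_image, sw_XiSet] using this
    · refine Or.inr (Or.inr ⟨i, Or.inr (Or.inr (Or.inr ?_))⟩)
      have := congrArg (fun S => sw '' S) h
      simpa [sw_sw_image, sw_XiSet'] using this

end Classify

/-- Enumeration of the `4n+2` candidate sets. -/
def fam : Bool ⊕ (Fin n ⊕ Fin n ⊕ Fin n ⊕ Fin n) → Set (GVert n)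
  | .inl false => Xbase n
  | .inl true => Ybase n
  | .inr (.inl i) => XiSet n i
  | .inr (.inr (.inl i)) => XiSet' n i
  | .inr (.inr (.inr (.inl i))) => YiSet n i
  | .inr (.inr (.inr (.inr i))) => YiSet' n i

lemma fam_inj : Function.Injective (fam (n := n)) := by
  intro x y h
  rcases x with (_ | _) | (i | i | i | i) <;> rcases y with (_ | _) | (j | j | j | j) <;>
    simp only [fam] at h <;>
    first
      | rfl
      | (have h1 := Set.ext_iff.mp h (GVert.a i)
         have h2 := Set.ext_iff.mp h (GVert.d i)
         clear h
         simp_all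
         done)
      | (have h1 := Set.ext_iff.mp h (GVert.a j)
         have h2 := Set.ext_iff.mp h (GVert.d j)
         clear h
         simp_all
         done)
      | (have h1 := Set.ext_iff.mp h (GVert.b i)
         have h2 := Set.ext_iff.mp h (GVert.d i)
         clear h
         simp_all
         done)
      | (have h1 := Set.ext_iff.mp h (GVert.b j)
         have h2 := Set.ext_iff.mp h (GVert.d j)
         clear h
         simp_all
         done)
      | (have h0 := Set.ext_iff.mp h GVert.u
         clear h
         simp_all
         done)

lemma mem_range_fam (Z : Set (GVert n)) :
    Z ∈ Set.range (fam (n := n)) ↔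
      (Z = Xbase n ∨ Z = Ybase n ∨
        ∃ i : Fin n, Z = XiSet n i ∨ Z = XiSet' n i ∨ Z = YiSet n i ∨ Z = YiSet' n i) := by
  constructor
  · rintro ⟨x, rfl⟩
    rcases x with (_ | _) | (i | i | i | i)
    exacts [Or.inl rfl, Or.inr (Or.inl rfl), Or.inr (Or.inr ⟨i, Or.inl rfl⟩),
      Or.inr (Or.inr ⟨i, Or.inr (Or.inl rfl)⟩), Or.inr (Or.inr ⟨i, Or.inr (Or.inr (Or.inl rfl))⟩),
      Or.inr (Or.inr ⟨i, Or.inr (Or.inr (Or.inr rfl))⟩)]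
  · rintro (rfl | rfl | ⟨i, rfl | rfl | rfl | rfl⟩)
    exacts [⟨.inl false, rfl⟩, ⟨.inl true, rfl⟩, ⟨.inr (.inl i), rfl⟩,
      ⟨.inr (.inr (.inl i)), rfl⟩, ⟨.inr (.inr (.inr (.inl i))), rfl⟩,
      ⟨.inr (.inr (.inr (.inr i))), rfl⟩]

lemma isIRSet_iff_mem (Z : Set (GVert n)) :
    IsIRSet (Gn n) Z ↔
      (Z = Xbase n ∨ Z = Ybase n ∨
        ∃ i : Fin n, Z = XiSet n i ∨ Z = XiSet' n i ∨ Z = YiSet n i ∨ Z = YiSet' n i) := by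
  rw [isIRSet_iff]
  constructor
  · rintro ⟨h1, h2⟩
    exact classify h1 h2
  · rintro (rfl | rfl | ⟨i, rfl | rfl | rfl | rfl⟩)
    exacts [⟨irred_Xbase, ncard_Xbase⟩, ⟨irred_Ybase, ncard_Ybase⟩,
      ⟨irred_XiSet i, ncard_XiSet i⟩, ⟨irred_XiSet' i, ncard_XiSet' i⟩,
      ⟨irred_YiSet i, ncard_YiSet i⟩, ⟨irred_YiSet' i, ncard_YiSet' i⟩]

lemma irsets_eq_range : {Z : Set (GVert n) | IsIRSet (Gn n) Z} = Set.range (fam (n := n)) := by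
  ext Z
  rw [Set.mem_setOf_eq, isIRSet_iff_mem, mem_range_fam]

lemma irsets_ncard : {Z : Set (GVert n) | IsIRSet (Gn n) Z}.ncard = 4 * n + 2 := by
  rw [irsets_eq_range, ← Set.image_univ, Set.ncard_image_of_injective _ fam_inj,
    Set.ncard_univ, Nat.card_eq_fintype_card]
  simp only [Fintype.card_sum, Fintype.card_bool, Fintype.card_fin]
  omega

end GnProof

/-- For every `n ≥ 1`, the `IR(Gₙ)`-sets are precisely the `4n + 2` sets
`X`, `Xᵢ`, `Xᵢ'`, `Y`, `Yᵢ`, `Yᵢ'`. -/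
theorem statement5 (n : ℕ) (hn : 1 ≤ n) :
    (∀ Z : Set (GVert n), IsIRSet (Gn n) Z ↔
      (Z = Xbase n ∨ Z = Ybase n ∨
        ∃ i : Fin n, Z = XiSet n i ∨ Z = XiSet' n i ∨ Z = YiSet n i ∨ Z = YiSet' n i)) ∧
    {Z : Set (GVert n) | IsIRSet (Gn n) Z}.ncard = 4 * n + 2 :=
  ⟨fun Z => GnProof.isIRSet_iff_mem Z, GnProof.irsets_ncard⟩
end
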